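/- arXiv:1409.5201 — 5 statements merged into one kernel-verified Lean document; each statement's English description precedes it below -/
import Mathlib

section
/- Let M be a connected topological manifold without boundary (a metric space in which every point has a neighborhood homeomorphic to ℝⁿ for some fixed n ≥ 1), let f : M → M be a homeomorphism, and let x ∈ M be a positively recurrent point of f, i.e. for every neighborhood V of x there exists N ≥ 1 with f^N(x) ∈ V. Then for every ε > 0 there exists a homeomorphism g : M → M such that sup_{y ∈ M} dist(g(y), f(y)) < ε and x is a periodic point of g, i.e. g^N(x) = x for some N ≥ 1. -/
open scoped Topology


open Metric Set


lemma bump_exists {E : Type*} [NormedAddCommGroup E] [NormedSpace ℝ E] [CompleteSpace E]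
    (p v : E) (s : ℝ) (hs : 0 < s) (hv : ‖v‖ < s) :
    ∃ H : E ≃ₜ E, H p = p + v ∧
      ∀ y, H y = y ∨ (‖y - p‖ < s ∧ ‖H y - p‖ < s) := by
  haveI : Nonempty E := ⟨p⟩
  set t : E → ℝ := fun y => max 0 (1 - ‖y - p‖ / s) with ht
  have htcont : Continuous t := by
    apply continuous_const.max
    continuity
  have ht01 : ∀ y, 0 ≤ t y ∧ t y ≤ 1 := by
    intro y
    constructor
    · exact le_max_left _ _
    · apply max_le (by norm_num)
      have : 0 ≤ ‖y - p‖ / s := div_nonneg (norm_nonneg _) hs.le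
      linarith
  have htlip : ∀ y₁ y₂, |t y₁ - t y₂| ≤ ‖y₁ - y₂‖ / s := by
    intro y₁ y₂
    have h1 : |t y₁ - t y₂| ≤ |(1 - ‖y₁ - p‖ / s) - (1 - ‖y₂ - p‖ / s)| := by
      simpa [ht, max_comm] using
        abs_max_sub_max_le_abs (1 - ‖y₁ - p‖ / s) (1 - ‖y₂ - p‖ / s) 0
    have h2 : |(1 - ‖y₁ - p‖ / s) - (1 - ‖y₂ - p‖ / s)| = |‖y₂ - p‖ - ‖y₁ - p‖| / s := by
      have : (1 - ‖y₁ - p‖ / s) - (1 - ‖y₂ - p‖ / s) = (‖y₂ - p‖ - ‖y₁ - p‖) / s := by ring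
      rw [this, abs_div, abs_of_pos hs]
    have h3 : |‖y₂ - p‖ - ‖y₁ - p‖| ≤ ‖y₁ - y₂‖ := by
      rw [abs_sub_comm]
      simpa [sub_sub_sub_cancel_right] using abs_norm_sub_norm_le (y₁ - p) (y₂ - p)
    rw [h2] at h1
    exact h1.trans (by gcongr)
  set F : E → E := fun y => y + t y • v with hF
  have keylow : ∀ y₁ y₂, ‖y₁ - y₂‖ * (1 - ‖v‖ / s) ≤ ‖F y₁ - F y₂‖ := by
    intro y₁ y₂
    have h1 : ‖y₁ - y₂‖ ≤ ‖F y₁ - F y₂‖ + |t y₁ - t y₂| * ‖v‖ := by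
      have : y₁ - y₂ = (F y₁ - F y₂) + (t y₂ - t y₁) • v := by
        simp only [hF, sub_smul]
        abel
      calc ‖y₁ - y₂‖ ≤ ‖F y₁ - F y₂‖ + ‖(t y₂ - t y₁) • v‖ := by
            rw [this]; exact norm_add_le _ _
        _ = ‖F y₁ - F y₂‖ + |t y₁ - t y₂| * ‖v‖ := by
            rw [norm_smul, Real.norm_eq_abs, abs_sub_comm]
    have h2 : |t y₁ - t y₂| * ‖v‖ ≤ ‖y₁ - y₂‖ / s * ‖v‖ :=
      mul_le_mul_of_nonneg_right (htlip _ _) (norm_nonneg _)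
    have : ‖y₁ - y₂‖ - ‖y₁ - y₂‖ / s * ‖v‖ ≤ ‖F y₁ - F y₂‖ := by linarith
    calc ‖y₁ - y₂‖ * (1 - ‖v‖ / s) = ‖y₁ - y₂‖ - ‖y₁ - y₂‖ / s * ‖v‖ := by
          field_simp
      _ ≤ ‖F y₁ - F y₂‖ := this
  have hvpos : 0 < 1 - ‖v‖ / s := by
    have : ‖v‖ / s < 1 := (div_lt_one hs).mpr hv
    linarith
  have hinj : Function.Injective F := by
    intro y₁ y₂ h
    have := keylow y₁ y₂
    rw [h, sub_self, norm_zero] at this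
    have h0 : ‖y₁ - y₂‖ ≤ 0 := by
      by_contra hc
      push_neg at hc
      nlinarith
    have : y₁ - y₂ = 0 := by
      rw [← norm_le_zero_iff]; exact h0
    exact sub_eq_zero.mp this
  have hsurj : Function.Surjective F := by
    intro z
    set Φ : E → E := fun y => z - t y • v with hΦ
    have hlip : LipschitzWith ⟨‖v‖ / s, by positivity⟩ Φ := by
      apply LipschitzWith.of_dist_le_mul
      intro y₁ y₂
      simp only [hΦ, dist_eq_norm]
      have : z - t y₁ • v - (z - t y₂ • v) = (t y₂ - t y₁) • v := by
        rw [sub_smul]; abel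
      rw [this, norm_smul, Real.norm_eq_abs, abs_sub_comm]
      calc |t y₁ - t y₂| * ‖v‖ ≤ ‖y₁ - y₂‖ / s * ‖v‖ :=
            mul_le_mul_of_nonneg_right (htlip _ _) (norm_nonneg _)
        _ = (‖v‖ / s) * ‖y₁ - y₂‖ := by ring
        _ = _ := rfl
    have hcontr : ContractingWith ⟨‖v‖ / s, by positivity⟩ Φ := by
      constructor
      · apply NNReal.coe_lt_coe.mp
        push_cast
        exact (div_lt_one hs).mpr hv
      · exact hlip
    set w := ContractingWith.fixedPoint Φ hcontr with hw
    refine ⟨w, ?_⟩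
    have hfix : Φ w = w := hcontr.fixedPoint_isFixedPt
    have hfix' : z - t w • v = w := hfix
    show w + t w • v = z
    exact (sub_eq_iff_eq_add.mp hfix').symm
  have hcontF : Continuous F := continuous_id.add (htcont.smul continuous_const)
  set e : E ≃ E := Equiv.ofBijective F ⟨hinj, hsurj⟩ with he
  have hinvlip : Continuous e.symm := by
    have : ∀ z₁ z₂, dist (e.symm z₁) (e.symm z₂) ≤
        Real.toNNReal (1 - ‖v‖ / s)⁻¹ * dist z₁ z₂ := by
      intro z₁ z₂
      have h1 : F (e.symm z₁) = z₁ := e.apply_symm_apply z₁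
      have h2 : F (e.symm z₂) = z₂ := e.apply_symm_apply z₂
      have := keylow (e.symm z₁) (e.symm z₂)
      rw [h1, h2] at this
      rw [dist_eq_norm, dist_eq_norm]
      rw [Real.coe_toNNReal _ (inv_nonneg.mpr hvpos.le)]
      calc ‖e.symm z₁ - e.symm z₂‖ ≤ ‖z₁ - z₂‖ / (1 - ‖v‖ / s) :=
            (le_div_iff₀ hvpos).mpr this
        _ = (1 - ‖v‖ / s)⁻¹ * ‖z₁ - z₂‖ := by ring
    exact (LipschitzWith.of_dist_le_mul this).continuous
  refine ⟨⟨e, hcontF, hinvlip⟩, ?_, ?_⟩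
  · show F p = p + v
    simp only [hF, ht]
    norm_num
  · intro y
    show F y = y ∨ (‖y - p‖ < s ∧ ‖F y - p‖ < s)
    by_cases hy : ‖y - p‖ < s
    · right
      refine ⟨hy, ?_⟩
      have ha : 0 ≤ ‖y - p‖ := norm_nonneg _
      have htval : t y = 1 - ‖y - p‖ / s := by
        simp only [ht]
        apply max_eq_right
        have : ‖y - p‖ / s < 1 := (div_lt_one hs).mpr hy
        linarith
      calc ‖F y - p‖ = ‖(y - p) + t y • v‖ := by simp only [hF]; abel_nf
        _ ≤ ‖y - p‖ + t y * ‖v‖ := by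
            refine (norm_add_le _ _).trans ?_
            rw [norm_smul, Real.norm_eq_abs, abs_of_nonneg (ht01 y).1]
        _ < s := by
            rw [htval]
            have h1 : ‖y - p‖ / s < 1 := (div_lt_one hs).mpr hy
            have h2 : (1 - ‖y - p‖ / s) * ‖v‖ < (1 - ‖y - p‖ / s) * s :=
              mul_lt_mul_of_pos_left hv (by linarith)
            have h3 : (1 - ‖y - p‖ / s) * s = s - ‖y - p‖ := by
              field_simp
            linarith
    · left
      push_neg at hy
      have : t y = 0 := by
        simp only [ht]
        apply max_eq_left
        have : 1 ≤ ‖y - p‖ / s := (one_le_div hs).mpr hy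
        linarith
      simp only [hF, this, zero_smul, add_zero]

lemma move_in_ball {E : Type*} [NormedAddCommGroup E] [NormedSpace ℝ E] [CompleteSpace E]
    (c : E) (R : ℝ) (hR : 0 < R) (q : E) (hq : ‖q - c‖ < R) :
    ∃ H : E ≃ₜ E, H q = c ∧ ∀ y, H y = y ∨ (‖y - c‖ < R ∧ ‖H y - c‖ < R) := by
  set d : ℝ := ‖q - c‖ with hd
  have hd0 : 0 ≤ d := norm_nonneg _
  set s : ℝ := (R - d) / 2 with hs
  have hspos : 0 < s := by simp only [hs]; linarith
  obtain ⟨m, hm⟩ := exists_nat_gt (d / s)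
  have hm0 : 0 < m := by
    rcases Nat.eq_zero_or_pos m with h | h
    · exfalso; rw [h] at hm; push_cast at hm
      have : 0 ≤ d / s := div_nonneg hd0 hspos.le
      linarith
    · exact h
  have hmR : (0:ℝ) < m := by exact_mod_cast hm0
  have hstep : d / m < s := by
    rw [div_lt_iff₀ hmR]
    calc d = d / s * s := by field_simp
      _ < m * s := by exact mul_lt_mul_of_pos_right hm hspos
      _ = s * m := by ring
  -- key geometric facts
  have hqj_c : ∀ j : ℕ, j ≤ m → ‖(q + ((j:ℝ)/m) • (c - q)) - c‖ ≤ d := by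
    intro j hj
    have h1 : (q + ((j:ℝ)/m) • (c - q)) - c = ((j:ℝ)/m - 1) • (c - q) := by
      rw [sub_smul, one_smul]; abel
    rw [h1, norm_smul, Real.norm_eq_abs]
    have hj1 : (j:ℝ)/m ≤ 1 := by
      rw [div_le_one hmR]; exact_mod_cast hj
    have hj0 : 0 ≤ (j:ℝ)/m := by positivity
    have : |(j:ℝ)/m - 1| ≤ 1 := by rw [abs_le]; constructor <;> linarith
    calc |(j:ℝ)/m - 1| * ‖c - q‖ ≤ 1 * ‖c - q‖ :=
          mul_le_mul_of_nonneg_right this (norm_nonneg _)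
      _ = d := by rw [one_mul, hd, norm_sub_rev]
  have hsd : s + d < R := by simp only [hs]; linarith
  -- induction
  have main : ∀ j : ℕ, j ≤ m → ∃ H : E ≃ₜ E,
      H q = q + ((j:ℝ)/m) • (c - q) ∧
      ∀ y, H y = y ∨ (‖y - c‖ < R ∧ ‖H y - c‖ < R) := by
    intro j
    induction j with
    | zero =>
      intro _
      exact ⟨Homeomorph.refl E, by simp, fun y => Or.inl rfl⟩
    | succ j ih =>
      intro hj
      obtain ⟨H₀, hH₀q, hH₀cond⟩ := ih (Nat.le_of_succ_le hj)
      set qj : E := q + ((j:ℝ)/m) • (c - q) with hqj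
      have hw : ‖((1:ℝ)/m) • (c - q)‖ < s := by
        rw [norm_smul, Real.norm_eq_abs, abs_of_pos (by positivity : (0:ℝ) < 1/m)]
        calc 1/(m:ℝ) * ‖c - q‖ = d / m := by rw [norm_sub_rev]; ring
          _ < s := hstep
      obtain ⟨B, hBq, hBcond⟩ := bump_exists qj (((1:ℝ)/m) • (c - q)) s hspos hw
      refine ⟨H₀.trans B, ?_, ?_⟩
      · show B (H₀ q) = _
        rw [hH₀q, hBq, hqj]
        rw [add_assoc, ← add_smul]
        congr 2
        push_cast
        field_simp
      · intro y
        have hqjc : ‖qj - c‖ ≤ d := hqj_c j (Nat.le_of_succ_le hj)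
        have key : ∀ z, B z ≠ z → (‖z - c‖ < R ∧ ‖B z - c‖ < R) := by
          intro z hz
          rcases hBcond z with h | h
          · exact absurd h hz
          · constructor
            · calc ‖z - c‖ ≤ ‖z - qj‖ + ‖qj - c‖ := norm_sub_le_norm_sub_add_norm_sub _ _ _
                _ < s + d := by linarith [h.1]
                _ < R := hsd
            · calc ‖B z - c‖ ≤ ‖B z - qj‖ + ‖qj - c‖ := norm_sub_le_norm_sub_add_norm_sub _ _ _
                _ < s + d := by linarith [h.2]
                _ < R := hsd
        have happ : (H₀.trans B) y = B (H₀ y) := rfl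
        rw [happ]
        by_cases hB : B (H₀ y) = H₀ y
        · rcases hH₀cond y with h | h
          · left; rw [hB, h]
          · right; rw [hB]; exact h
        · right
          obtain ⟨h1, h2⟩ := key _ hB
          constructor
          · rcases hH₀cond y with h | h
            · rw [h] at h1; exact h1
            · exact h.1
          · exact h2
  obtain ⟨H, hHq, hHcond⟩ := main m le_rfl
  refine ⟨H, ?_, hHcond⟩
  rw [hHq, div_self (ne_of_gt hmR), one_smul]
  abel

lemma glue_homeo {M : Type*} [TopologicalSpace M] [T2Space M]
    {E : Type*} [TopologicalSpace E]
    (U : Set M) (hU : IsOpen U) (φ : U ≃ₜ E) (H : E ≃ₜ E)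
    (K : Set E) (hK : IsCompact K) (hfix : ∀ y ∉ K, H y = y) (himg : H '' K ⊆ K) :
    ∃ h : M ≃ₜ M, (∀ (m : M) (hm : m ∈ U), h m = (φ.symm (H (φ ⟨m, hm⟩)) : M)) ∧
      (∀ m ∉ U, h m = m) := by
  classical
  have hfix' : ∀ y ∉ K, H.symm y = y := by
    intro y hy
    set z := H.symm y with hz
    have hzy : H z = y := H.apply_symm_apply y
    by_cases hzK : z ∈ K
    · exact absurd (himg ⟨z, hzK, hzy⟩) hy
    · show z = y
      rw [← hzy, hfix z hzK]
  set F : (E ≃ₜ E) → M → M := fun H' m =>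
    if hm : m ∈ U then (φ.symm (H' (φ ⟨m, hm⟩)) : M) else m with hFdef
  have hmemF : ∀ (H' : E ≃ₜ E) (m : M) (hm : m ∈ U),
      F H' m = (φ.symm (H' (φ ⟨m, hm⟩)) : M) := by
    intro H' m hm
    simp only [hFdef, dif_pos hm]
  have houtF : ∀ (H' : E ≃ₜ E) (m : M), m ∉ U → F H' m = m := by
    intro H' m hm
    simp only [hFdef, dif_neg hm]
  have hinv : ∀ (A B : E ≃ₜ E), (∀ y, B (A y) = y) → ∀ m, F B (F A m) = m := by
    intro A B hAB m
    by_cases hm : m ∈ U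
    · rw [hmemF A m hm]
      have hmem2 : (φ.symm (A (φ ⟨m, hm⟩)) : M) ∈ U := (φ.symm (A (φ ⟨m, hm⟩))).2
      rw [hmemF B _ hmem2]
      have : (⟨(φ.symm (A (φ ⟨m, hm⟩)) : M), hmem2⟩ : U) = φ.symm (A (φ ⟨m, hm⟩)) :=
        Subtype.coe_eta _ _
      rw [this, φ.apply_symm_apply, hAB, φ.symm_apply_apply]
    · rw [houtF A m hm, houtF B m hm]
  -- continuity
  set C : Set M := Subtype.val '' (⇑φ.symm '' K) with hCdef
  have hCU : C ⊆ U := by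
    rintro _ ⟨u, _, rfl⟩
    exact u.2
  have hCcompact : IsCompact C := by
    apply IsCompact.image
    · exact hK.image φ.symm.continuous
    · exact continuous_subtype_val
  have hCclosed : IsClosed C := hCcompact.isClosed
  have hFid : ∀ (H' : E ≃ₜ E), (∀ y ∉ K, H' y = y) → ∀ m ∉ C, F H' m = m := by
    intro H' hH' m hm
    by_cases hmU : m ∈ U
    · rw [hmemF H' m hmU]
      have hyK : φ ⟨m, hmU⟩ ∉ K := by
        intro hyK
        apply hm
        refine ⟨φ.symm (φ ⟨m, hmU⟩), ⟨_, hyK, rfl⟩, ?_⟩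
        rw [φ.symm_apply_apply]
      rw [hH' _ hyK, φ.symm_apply_apply]
    · exact houtF H' m hmU
  have hcont : ∀ (H' : E ≃ₜ E), (∀ y ∉ K, H' y = y) → Continuous (F H') := by
    intro H' hH'
    rw [continuous_iff_continuousAt]
    intro m
    by_cases hm : m ∈ C
    · have hmU : m ∈ U := hCU hm
      have : ContinuousOn (F H') U := by
        rw [continuousOn_iff_continuous_restrict]
        have : U.domRestrict (F H') = fun u : U => (φ.symm (H' (φ u)) : M) := by
          funext u
          simp only [domRestrict, hmemF H' u u.2, Subtype.coe_eta]
        rw [this]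
        exact continuous_subtype_val.comp
          (φ.symm.continuous.comp (H'.continuous.comp φ.continuous))
      exact this.continuousAt (hU.mem_nhds hmU)
    · have hopen : IsOpen Cᶜ := hCclosed.isOpen_compl
      have : F H' =ᶠ[nhds m] id := by
        filter_upwards [hopen.mem_nhds hm] with m' hm'
        exact hFid H' hH' m' hm'
      exact (continuousAt_id.congr this.symm)
  refine ⟨⟨⟨F H, F H.symm, hinv H H.symm (fun y => H.symm_apply_apply y),
      hinv H.symm H (fun y => H.apply_symm_apply y)⟩,
      hcont H hfix, hcont H.symm hfix'⟩, ?_, ?_⟩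
  · intro m hm
    exact hmemF H m hm
  · intro m hm
    exact houtF H m hm

/-- **C⁰-closing lemma.** Let `M` be a connected topological manifold without boundary
(a metric space in which every point has a neighborhood homeomorphic to `ℝⁿ` for some
fixed `n ≥ 1`), `f : M → M` a homeomorphism and `x` a positively recurrent point of `f`.
Then for every `ε > 0` there is a homeomorphism `g` with `sup_y dist (g y) (f y) < ε`
for which `x` is periodic. -/
theorem stmt0 {M : Type*} [MetricSpace M] [ConnectedSpace M]
    (n : ℕ) (hn : 1 ≤ n)
    (hman : ∀ p : M, ∃ U : Set M, IsOpen U ∧ p ∈ U ∧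
      Nonempty (U ≃ₜ EuclideanSpace ℝ (Fin n)))
    (f : M ≃ₜ M) (x : M)
    (hrec : ∀ V ∈ 𝓝 x, ∃ N : ℕ, 1 ≤ N ∧ (⇑f)^[N] x ∈ V)
    (ε : ℝ) (hε : 0 < ε) :
    ∃ g : M ≃ₜ M,
      (⨆ y : M, edist (g y) (f y)) < ENNReal.ofReal ε ∧
      ∃ N : ℕ, 1 ≤ N ∧ (⇑g)^[N] x = x := by
  classical
  obtain ⟨U, hUopen, hxU, ⟨φ⟩⟩ := hman x
  set c := φ ⟨x, hxU⟩ with hc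
  set A : Set U := Subtype.val ⁻¹' (Metric.ball x (ε/3)) with hA
  have hAopen : IsOpen A := Metric.isOpen_ball.preimage continuous_subtype_val
  have hxA : (⟨x, hxU⟩ : U) ∈ A := by
    simp only [hA, mem_preimage, Metric.mem_ball, dist_self]
    positivity
  have hφA_open : IsOpen (φ '' A) := φ.isOpenMap A hAopen
  have hcA : c ∈ φ '' A := ⟨_, hxA, rfl⟩
  obtain ⟨R', hR'pos, hballA⟩ := Metric.isOpen_iff.mp hφA_open c hcA
  set R := R'/2 with hR
  have hRpos : 0 < R := by positivity
  have hRR' : Metric.ball c R ⊆ Metric.ball c R' :=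
    Metric.ball_subset_ball (by simp only [hR]; linarith)
  set S : Set M := Subtype.val '' (φ ⁻¹' Metric.ball c R) with hS
  have hSopen : IsOpen S :=
    hUopen.isOpenMap_subtype_val _ ((Metric.isOpen_ball).preimage φ.continuous)
  have hxS : x ∈ S := ⟨⟨x, hxU⟩, by
    simp only [mem_preimage, ← hc]
    exact Metric.mem_ball_self hRpos, rfl⟩
  have hSnhds : S ∈ 𝓝 x := hSopen.mem_nhds hxS
  have hex : ∃ N, 1 ≤ N ∧ (⇑f)^[N] x ∈ S := hrec S hSnhds
  set N := Nat.find hex with hN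
  obtain ⟨hN1, hNS⟩ := Nat.find_spec hex
  have hNmin : ∀ k, k < N → ¬(1 ≤ k ∧ (⇑f)^[k] x ∈ S) := fun k hk => Nat.find_min hex hk
  obtain ⟨u, huball, huval⟩ := hNS
  set q := φ u with hq
  have hqnorm : ‖q - c‖ < R := by
    have : q ∈ Metric.ball c R := huball
    rwa [Metric.mem_ball, dist_eq_norm] at this
  obtain ⟨H, hHq, hHcond⟩ := move_in_ball c R hRpos q hqnorm
  have hfixK : ∀ y ∉ Metric.closedBall c R, H y = y := by
    intro y hy
    rcases hHcond y with h | h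
    · exact h
    · exact absurd (Metric.mem_closedBall.mpr (by rw [dist_eq_norm]; exact h.1.le)) hy
  have himgK : H '' Metric.closedBall c R ⊆ Metric.closedBall c R := by
    rintro _ ⟨y, hy, rfl⟩
    rcases hHcond y with h | h
    · rwa [h]
    · exact Metric.mem_closedBall.mpr (by rw [dist_eq_norm]; exact h.2.le)
  obtain ⟨h, h_in, h_out⟩ :=
    glue_homeo U hUopen φ H _ (isCompact_closedBall c R) hfixK himgK
  set g := f.trans h with hg
  -- h fixes points outside S
  have hfixpt : ∀ z : M, z ∉ S → h z = z := by
    intro z hz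
    by_cases hzU : z ∈ U
    · rw [h_in z hzU]
      have hy : H (φ ⟨z, hzU⟩) = φ ⟨z, hzU⟩ := by
        rcases hHcond (φ ⟨z, hzU⟩) with hh | hh
        · exact hh
        · exfalso
          apply hz
          exact ⟨⟨z, hzU⟩, by rw [mem_preimage, Metric.mem_ball, dist_eq_norm]; exact hh.1, rfl⟩
      rw [hy, φ.symm_apply_apply]
    · exact h_out z hzU
  -- orbit agreement
  have horbit : ∀ k, k < N → (⇑g)^[k] x = (⇑f)^[k] x := by
    intro k
    induction k with
    | zero => intro _; simp
    | succ k ih =>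
      intro hk
      have hk' : k < N := Nat.lt_of_succ_lt hk
      have hstep : (⇑g)^[k+1] x = h (f ((⇑f)^[k] x)) := by
        rw [Function.iterate_succ_apply', ih hk']
        rfl
      rw [hstep]
      have heq : h (f ((⇑f)^[k] x)) = h ((⇑f)^[k+1] x) := by
        rw [Function.iterate_succ_apply']
      rw [heq, Function.iterate_succ_apply']
      apply hfixpt
      intro hmem
      exact hNmin (k+1) hk ⟨Nat.succ_le_succ (Nat.zero_le k), by
        rwa [Function.iterate_succ_apply']⟩
  have hper : (⇑g)^[N] x = x := by
    have hN1' : 1 ≤ N := hN1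
    obtain ⟨N', hN'⟩ : ∃ N', N = N' + 1 := ⟨N - 1, by omega⟩
    rw [hN', Function.iterate_succ_apply', horbit N' (by omega)]
    have h1 : g ((⇑f)^[N'] x) = h (f ((⇑f)^[N'] x)) := rfl
    have h2 : f ((⇑f)^[N'] x) = (⇑f)^[N'+1] x := (Function.iterate_succ_apply' _ _ _).symm
    have huval' : (u : M) = (⇑f)^[N'+1] x := by rw [huval, ← hN']
    rw [h1, h2, ← huval', h_in _ u.2, Subtype.coe_eta, ← hq, hHq, hc, φ.symm_apply_apply]
  -- displacement
  have hdisp : ∀ z : M, h z ≠ z → dist (h z) x < ε/3 ∧ dist z x < ε/3 := by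
    intro z hne
    have hzU : z ∈ U := by
      by_contra hzU
      exact hne (h_out z hzU)
    set y := φ ⟨z, hzU⟩ with hy
    have hmove : H y ≠ y := by
      intro hfix
      apply hne
      rw [h_in z hzU, ← hy, hfix, hy, φ.symm_apply_apply]
    have hcnd : ‖y - c‖ < R ∧ ‖H y - c‖ < R := by
      rcases hHcond y with hh | hh
      · exact absurd hh hmove
      · exact hh
    have hyA : (⟨z, hzU⟩ : U) ∈ A := by
      have : y ∈ φ '' A := hballA (hRR' (by rw [Metric.mem_ball, dist_eq_norm]; exact hcnd.1))
      obtain ⟨a, haA, hay⟩ := this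
      have : a = ⟨z, hzU⟩ := φ.injective (hay.trans hy)
      exact this ▸ haA
    have hHyA : H y ∈ φ '' A := hballA (hRR' (by rw [Metric.mem_ball, dist_eq_norm]; exact hcnd.2))
    obtain ⟨b, hbA, hby⟩ := hHyA
    have hsymm : φ.symm (H y) = b := by rw [← hby, φ.symm_apply_apply]
    constructor
    · rw [h_in z hzU, ← hy, hsymm]
      exact hbA
    · exact hyA
  refine ⟨g, ?_, N, hN1, hper⟩
  have hle : ∀ y : M, edist (g y) (f y) ≤ ENNReal.ofReal (2*ε/3) := by
    intro y
    have hgy : g y = h (f y) := rfl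
    rw [hgy, edist_dist]
    apply ENNReal.ofReal_le_ofReal
    by_cases hz : h (f y) = f y
    · rw [hz, dist_self]; positivity
    · obtain ⟨h1, h2⟩ := hdisp (f y) hz
      calc dist (h (f y)) (f y) ≤ dist (h (f y)) x + dist x (f y) := dist_triangle _ _ _
        _ = dist (h (f y)) x + dist (f y) x := by rw [dist_comm x]
        _ ≤ ε/3 + ε/3 := by linarith
        _ ≤ 2*ε/3 := by linarith
  calc (⨆ y : M, edist (g y) (f y)) ≤ ENNReal.ofReal (2*ε/3) := iSup_le hle
    _ < ENNReal.ofReal ε := by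
        rw [ENNReal.ofReal_lt_ofReal_iff hε]
        linarith
end

section
/- Define on N the equivalence relation γ₁ ∼ γ₂ if and only if there exist ε ∈ {−1, +1} and c ∈ ℝ such that γ₁(t) = γ₂(εt + c) for all t ∈ ℝ/ℤ (i.e. γ₁ = γ₂ ∘ u for an isometry u of ℝ). Let L = N/∼ and for equivalence classes ℓ₁, ℓ₂ set δ(ℓ₁, ℓ₂) = inf { d(γ₁, γ₂) : γ₁ ∈ ℓ₁, γ₂ ∈ ℓ₂ }. Then δ is a distance on L (in particular δ(ℓ₁, ℓ₂) = 0 implies ℓ₁ = ℓ₂), and the metric space (L, δ) is complete. -/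
open scoped Topology
open Filter

/-- `Γ`: the space of `C¹` loops `γ : ℝ/ℤ → ℝ²`, seen as 1-periodic `C¹` maps `ℝ → ℝ²`. -/
def InGamma (γ : ℝ → EuclideanSpace ℝ (Fin 2)) : Prop :=
  ContDiff ℝ 1 γ ∧ Function.Periodic γ 1

/-- The distance on `Γ` induced by the C¹ norm `‖γ‖ = ‖γ‖_∞ + ‖γ'‖_∞`. -/
noncomputable def dC1 (γ₁ γ₂ : ℝ → EuclideanSpace ℝ (Fin 2)) : ℝ :=
  (⨆ t : ℝ, dist (γ₁ t) (γ₂ t)) + (⨆ t : ℝ, dist (deriv γ₁ t) (deriv γ₂ t))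

/-- `N`: the set of unit-speed parametrizations in `Γ`. -/
def InN (γ : ℝ → EuclideanSpace ℝ (Fin 2)) : Prop :=
  InGamma γ ∧ ∀ t : ℝ, ‖deriv γ t‖ = 1

/-- `γ₁ ∼ γ₂` iff `γ₁ = γ₂ ∘ u` for an isometry `u : t ↦ εt + c` of `ℝ`, `ε = ±1`. -/
def LoopRel (γ₁ γ₂ : ℝ → EuclideanSpace ℝ (Fin 2)) : Prop :=
  ∃ ε c : ℝ, (ε = 1 ∨ ε = -1) ∧ ∀ t : ℝ, γ₁ t = γ₂ (ε * t + c)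

/-- `δ([γ₁], [γ₂]) = inf { d(g₁, g₂) : g₁ ∈ [γ₁], g₂ ∈ [γ₂] }`. -/
noncomputable def deltaDist (γ₁ γ₂ : ℝ → EuclideanSpace ℝ (Fin 2)) : ℝ :=
  sInf {r : ℝ | ∃ g₁ g₂ : ℝ → EuclideanSpace ℝ (Fin 2),
    LoopRel g₁ γ₁ ∧ LoopRel g₂ γ₂ ∧ r = dC1 g₁ g₂}

noncomputable abbrev E := EuclideanSpace ℝ (Fin 2)

-- basic rel lemmas
lemma rel_refl (γ : ℝ → E) : LoopRel γ γ :=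
  ⟨1, 0, Or.inl rfl, fun t => by simp⟩

lemma rel_symm {γ₁ γ₂ : ℝ → E} (h : LoopRel γ₁ γ₂) : LoopRel γ₂ γ₁ := by
  obtain ⟨ε, c, hε, h⟩ := h
  have hε2 : ε * ε = 1 := by rcases hε with rfl | rfl <;> norm_num
  refine ⟨ε, -(ε * c), hε, fun t => ?_⟩
  rw [h (ε * t + -(ε * c))]
  have key : ε * (ε * t + -(ε * c)) + c = t := by linear_combination (t - c) * hε2
  rw [key]

lemma rel_trans {γ₁ γ₂ γ₃ : ℝ → E} (h : LoopRel γ₁ γ₂) (h' : LoopRel γ₂ γ₃) :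
    LoopRel γ₁ γ₃ := by
  obtain ⟨ε, c, hε, h⟩ := h
  obtain ⟨ε', c', hε', h'⟩ := h'
  refine ⟨ε' * ε, ε' * c + c', ?_, fun t => ?_⟩
  · rcases hε with rfl | rfl <;> rcases hε' with rfl | rfl <;> norm_num
  · rw [h t, h' (ε * t + c)]; ring_nf

lemma periodic_int {γ : ℝ → E} (h : Function.Periodic γ 1) (x : ℝ) (n : ℤ) :
    γ (x + n) = γ x := by simpa using (h.int_mul n) x

/-- All the analytic facts we need about a reparametrization `g ∼ γ` of `γ ∈ N`. -/
structure NiceFacts (g : ℝ → E) : Prop where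
  diff : Differentiable ℝ g
  per : Function.Periodic g 1
  unit : ∀ t, ‖deriv g t‖ = 1
  contDeriv : Continuous (deriv g)
  bdd : ∃ M : ℝ, ∀ t, ‖g t‖ ≤ M

lemma niceFacts_of_rel {γ g : ℝ → E} (hγ : InN γ) (hg : LoopRel g γ) : NiceFacts g := by
  obtain ⟨⟨hC1, hper⟩, hunit⟩ := hγ
  obtain ⟨ε, c, hε, hrel⟩ := hg
  have hεabs : ‖ε‖ = 1 := by rcases hε with rfl | rfl <;> simp
  have hγdiff : Differentiable ℝ γ := hC1.differentiable one_ne_zero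
  have hγderiv : Continuous (deriv γ) := hC1.continuous_deriv le_rfl
  have hgd : ∀ t : ℝ, HasDerivAt g (ε • deriv γ (ε * t + c)) t := by
    intro t
    have hu : HasDerivAt (fun t : ℝ => ε * t + c) ε t := by
      simpa using ((hasDerivAt_id t).const_mul ε).add_const c
    have := ((hγdiff (ε * t + c)).hasDerivAt).scomp t hu
    refine this.congr_of_eventuallyEq ?_
    filter_upwards with s using (hrel s).symm ▸ rfl
  have hderiv_eq : ∀ t, deriv g t = ε • deriv γ (ε * t + c) := fun t => (hgd t).deriv
  have hgcont : Continuous g := by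
    have : Continuous fun t : ℝ => γ (ε * t + c) :=
      hC1.continuous.comp (by continuity)
    exact this.congr fun t => (hrel t).symm
  have per : Function.Periodic g 1 := by
    intro s
    rw [hrel (s + 1), hrel s]
    have heq : ε * (s + 1) + c = ε * s + c + ε := by ring
    rw [heq]
    rcases hε with rfl | rfl
    · exact hper _
    · simpa using periodic_int hper (-1 * s + c) (-1)
  refine ⟨fun t => (hgd t).differentiableAt, per, ?_, ?_, ?_⟩
  · intro t
    rw [hderiv_eq t, norm_smul, hεabs, hunit, one_mul]
  · have : Continuous fun t : ℝ => ε • deriv γ (ε * t + c) :=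
      (hγderiv.comp (by continuity)).const_smul ε
    exact this.congr fun t => (hderiv_eq t).symm
  · obtain ⟨M, hM⟩ := (isCompact_Icc (a := (0:ℝ)) (b := 1)).exists_bound_of_continuousOn
      hgcont.continuousOn
    refine ⟨M, fun t => ?_⟩
    have h1 : Int.fract t + (⌊t⌋ : ℝ) = t := by rw [Int.fract]; ring
    have hfr : g t = g (Int.fract t) := by
      conv_lhs => rw [← h1]
      exact periodic_int per _ _
    rw [hfr]
    exact hM _ ⟨Int.fract_nonneg t, le_of_lt (Int.fract_lt_one t)⟩

-- dC1 machinery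
lemma bdd_dist {a b : ℝ → E} (ha : ∃ M, ∀ t, ‖a t‖ ≤ M) (hb : ∃ M, ∀ t, ‖b t‖ ≤ M) :
    BddAbove (Set.range fun t => dist (a t) (b t)) := by
  obtain ⟨M, hM⟩ := ha; obtain ⟨M', hM'⟩ := hb
  refine ⟨M + M', ?_⟩
  rintro r ⟨t, rfl⟩
  calc dist (a t) (b t) ≤ ‖a t‖ + ‖b t‖ := dist_le_norm_add_norm _ _
    _ ≤ M + M' := add_le_add (hM t) (hM' t)

lemma bdd_dist_deriv {a b : ℝ → E} (ha : NiceFacts a) (hb : NiceFacts b) :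
    BddAbove (Set.range fun t => dist (deriv a t) (deriv b t)) :=
  bdd_dist ⟨1, fun t => (ha.unit t).le⟩ ⟨1, fun t => (hb.unit t).le⟩

lemma dC1_nonneg (g₁ g₂ : ℝ → E) : 0 ≤ dC1 g₁ g₂ :=
  add_nonneg (Real.iSup_nonneg fun t => dist_nonneg) (Real.iSup_nonneg fun t => dist_nonneg)

lemma dist_le_dC1 {g₁ g₂ : ℝ → E} (h₁ : NiceFacts g₁) (h₂ : NiceFacts g₂) (t : ℝ) :
    dist (g₁ t) (g₂ t) ≤ dC1 g₁ g₂ := by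
  have h := le_ciSup (bdd_dist h₁.bdd h₂.bdd) t
  calc dist (g₁ t) (g₂ t) ≤ ⨆ s, dist (g₁ s) (g₂ s) := h
    _ ≤ dC1 g₁ g₂ := le_add_of_nonneg_right (Real.iSup_nonneg fun _ => dist_nonneg)

lemma dist_deriv_le_dC1 {g₁ g₂ : ℝ → E} (h₁ : NiceFacts g₁) (h₂ : NiceFacts g₂) (t : ℝ) :
    dist (deriv g₁ t) (deriv g₂ t) ≤ dC1 g₁ g₂ := by
  have h := le_ciSup (bdd_dist_deriv h₁ h₂) t
  calc dist (deriv g₁ t) (deriv g₂ t) ≤ ⨆ s, dist (deriv g₁ s) (deriv g₂ s) := h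
    _ ≤ dC1 g₁ g₂ := le_add_of_nonneg_left (Real.iSup_nonneg fun _ => dist_nonneg)

lemma dC1_le {g₁ g₂ : ℝ → E} {A B : ℝ} (hA0 : 0 ≤ A) (hB0 : 0 ≤ B)
    (hA : ∀ t, dist (g₁ t) (g₂ t) ≤ A) (hB : ∀ t, dist (deriv g₁ t) (deriv g₂ t) ≤ B) :
    dC1 g₁ g₂ ≤ A + B :=
  add_le_add (Real.iSup_le hA hA0) (Real.iSup_le hB hB0)

lemma dC1_comm (g₁ g₂ : ℝ → E) : dC1 g₁ g₂ = dC1 g₂ g₁ := by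
  unfold dC1; simp only [dist_comm]

lemma dC1_self (g : ℝ → E) : dC1 g g = 0 := by
  unfold dC1; simp

lemma iSup_dist_triangle {a b c : ℝ → E}
    (hab : BddAbove (Set.range fun t => dist (a t) (b t)))
    (hbc : BddAbove (Set.range fun t => dist (b t) (c t))) :
    (⨆ t, dist (a t) (c t)) ≤ (⨆ t, dist (a t) (b t)) + ⨆ t, dist (b t) (c t) :=
  Real.iSup_le
    (fun t => (dist_triangle (a t) (b t) (c t)).trans
      (add_le_add (le_ciSup hab t) (le_ciSup hbc t)))
    (add_nonneg (Real.iSup_nonneg fun _ => dist_nonneg) (Real.iSup_nonneg fun _ => dist_nonneg))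

lemma dC1_triangle {g₁ g₂ g₃ : ℝ → E} (h₁ : NiceFacts g₁) (h₂ : NiceFacts g₂)
    (h₃ : NiceFacts g₃) : dC1 g₁ g₃ ≤ dC1 g₁ g₂ + dC1 g₂ g₃ := by
  have hA := iSup_dist_triangle (a := g₁) (b := g₂) (c := g₃)
    (bdd_dist h₁.bdd h₂.bdd) (bdd_dist h₂.bdd h₃.bdd)
  have hB := iSup_dist_triangle (a := deriv g₁) (b := deriv g₂) (c := deriv g₃)
    (bdd_dist_deriv h₁ h₂) (bdd_dist_deriv h₂ h₃)
  unfold dC1 at *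
  linarith

lemma iSup_comp_affine (F : ℝ → ℝ) {ε : ℝ} (hε : ε ≠ 0) (c : ℝ) :
    (⨆ t : ℝ, F (ε * t + c)) = ⨆ t, F t := by
  have hs : Function.Surjective (fun t : ℝ => ε * t + c) := fun y =>
    ⟨(y - c) / ε, by field_simp; ring⟩
  rw [iSup, iSup]
  congr 1
  exact hs.range_comp F

lemma hasDerivAt_comp_affine {g : ℝ → E} (hg : Differentiable ℝ g) (ε c t : ℝ) :
    HasDerivAt (fun s => g (ε * s + c)) (ε • deriv g (ε * t + c)) t := by
  have hu : HasDerivAt (fun s : ℝ => ε * s + c) ε t := by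
    simpa using ((hasDerivAt_id t).const_mul ε).add_const c
  exact ((hg (ε * t + c)).hasDerivAt).scomp t hu

lemma dC1_reparam {g₁ g₂ : ℝ → E} (h₁ : NiceFacts g₁) (h₂ : NiceFacts g₂)
    {ε : ℝ} (hε : ε = 1 ∨ ε = -1) (c : ℝ) :
    dC1 (fun t => g₁ (ε * t + c)) (fun t => g₂ (ε * t + c)) = dC1 g₁ g₂ := by
  have hε0 : ε ≠ 0 := by rcases hε with rfl | rfl <;> norm_num
  have hεabs : ‖ε‖ = 1 := by rcases hε with rfl | rfl <;> simp
  unfold dC1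
  congr 1
  · exact iSup_comp_affine (fun s => dist (g₁ s) (g₂ s)) hε0 c
  · have hd : ∀ t, dist (deriv (fun s => g₁ (ε * s + c)) t) (deriv (fun s => g₂ (ε * s + c)) t)
        = dist (deriv g₁ (ε * t + c)) (deriv g₂ (ε * t + c)) := by
      intro t
      rw [(hasDerivAt_comp_affine h₁.diff ε c t).deriv,
        (hasDerivAt_comp_affine h₂.diff ε c t).deriv, dist_smul₀, hεabs, one_mul]
    rw [iSup_congr hd]
    exact iSup_comp_affine (fun s => dist (deriv g₁ s) (deriv g₂ s)) hε0 c

-- deltaDist machinery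
def dSet (γ₁ γ₂ : ℝ → E) : Set ℝ :=
  {r : ℝ | ∃ g₁ g₂ : ℝ → EuclideanSpace ℝ (Fin 2),
    LoopRel g₁ γ₁ ∧ LoopRel g₂ γ₂ ∧ r = dC1 g₁ g₂}

lemma deltaDist_eq (γ₁ γ₂ : ℝ → E) : deltaDist γ₁ γ₂ = sInf (dSet γ₁ γ₂) := rfl

lemma dSet_nonempty (γ₁ γ₂ : ℝ → E) : (dSet γ₁ γ₂).Nonempty :=
  ⟨dC1 γ₁ γ₂, γ₁, γ₂, rel_refl _, rel_refl _, rfl⟩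

lemma dSet_bddBelow (γ₁ γ₂ : ℝ → E) : BddBelow (dSet γ₁ γ₂) := by
  refine ⟨0, ?_⟩
  rintro r ⟨g₁, g₂, -, -, rfl⟩
  exact dC1_nonneg _ _

lemma delta_nonneg (γ₁ γ₂ : ℝ → E) : 0 ≤ deltaDist γ₁ γ₂ :=
  le_csInf (dSet_nonempty _ _) (by rintro r ⟨g₁, g₂, -, -, rfl⟩; exact dC1_nonneg _ _)

lemma delta_le {γ₁ γ₂ g₁ g₂ : ℝ → E} (h₁ : LoopRel g₁ γ₁) (h₂ : LoopRel g₂ γ₂) :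
    deltaDist γ₁ γ₂ ≤ dC1 g₁ g₂ :=
  csInf_le (dSet_bddBelow _ _) ⟨g₁, g₂, h₁, h₂, rfl⟩

lemma delta_welldef {γ₁ γ₁' γ₂ : ℝ → E} (h : LoopRel γ₁ γ₁') :
    deltaDist γ₁ γ₂ = deltaDist γ₁' γ₂ := by
  rw [deltaDist_eq, deltaDist_eq]
  congr 1
  ext r
  constructor
  · rintro ⟨g₁, g₂, hg₁, hg₂, rfl⟩
    exact ⟨g₁, g₂, rel_trans hg₁ h, hg₂, rfl⟩
  · rintro ⟨g₁, g₂, hg₁, hg₂, rfl⟩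
    exact ⟨g₁, g₂, rel_trans hg₁ (rel_symm h), hg₂, rfl⟩

lemma delta_comm (γ₁ γ₂ : ℝ → E) : deltaDist γ₁ γ₂ = deltaDist γ₂ γ₁ := by
  rw [deltaDist_eq, deltaDist_eq]
  congr 1
  ext r
  constructor
  · rintro ⟨g₁, g₂, hg₁, hg₂, rfl⟩
    exact ⟨g₂, g₁, hg₂, hg₁, dC1_comm _ _⟩
  · rintro ⟨g₁, g₂, hg₁, hg₂, rfl⟩
    exact ⟨g₂, g₁, hg₂, hg₁, dC1_comm _ _⟩

lemma delta_self (γ : ℝ → E) : deltaDist γ γ = 0 :=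
  le_antisymm (by simpa [dC1_self] using delta_le (rel_refl γ) (rel_refl γ)) (delta_nonneg _ _)

lemma delta_triangle {γ₁ γ₂ γ₃ : ℝ → E} (h₁ : InN γ₁) (h₂ : InN γ₂) (h₃ : InN γ₃) :
    deltaDist γ₁ γ₃ ≤ deltaDist γ₁ γ₂ + deltaDist γ₂ γ₃ := by
  have key : ∀ r ∈ dSet γ₁ γ₂, ∀ s ∈ dSet γ₂ γ₃, deltaDist γ₁ γ₃ ≤ r + s := by
    rintro r ⟨g₁, g₂, hg₁, hg₂, rfl⟩ s ⟨g₂', g₃, hg₂', hg₃, rfl⟩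
    -- g₂' = g₂ ∘ u
    obtain ⟨ε, c, hε, hu⟩ : LoopRel g₂' g₂ := rel_trans hg₂' (rel_symm hg₂)
    have hg₁u : LoopRel (fun t => g₁ (ε * t + c)) γ₁ :=
      rel_trans ⟨ε, c, hε, fun t => rfl⟩ hg₁
    have e1 : dC1 (fun t => g₁ (ε * t + c)) g₂' = dC1 g₁ g₂ := by
      have : g₂' = fun t => g₂ (ε * t + c) := funext hu
      rw [this]
      exact dC1_reparam (niceFacts_of_rel h₁ hg₁) (niceFacts_of_rel h₂ hg₂) hε c
    calc deltaDist γ₁ γ₃ ≤ dC1 (fun t => g₁ (ε * t + c)) g₃ := delta_le hg₁u hg₃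
      _ ≤ dC1 (fun t => g₁ (ε * t + c)) g₂' + dC1 g₂' g₃ :=
          dC1_triangle (niceFacts_of_rel h₁ hg₁u) (niceFacts_of_rel h₂ hg₂')
            (niceFacts_of_rel h₃ hg₃)
      _ = dC1 g₁ g₂ + dC1 g₂' g₃ := by rw [e1]
  rw [deltaDist_eq γ₁ γ₂, deltaDist_eq γ₂ γ₃]
  rw [← sub_le_iff_le_add']
  refine le_csInf (dSet_nonempty _ _) fun s hs => ?_
  rw [sub_le_iff_le_add']
  rw [← sub_le_iff_le_add]
  refine le_csInf (dSet_nonempty _ _) fun r hr => ?_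
  rw [sub_le_iff_le_add]
  exact (key r hr s hs).trans (by linarith)

lemma delta_zero_rel {γ₁ γ₂ : ℝ → E} (h₁ : InN γ₁) (h₂ : InN γ₂)
    (h : deltaDist γ₁ γ₂ = 0) : LoopRel γ₁ γ₂ := by
  have hper₂ : Function.Periodic γ₂ 1 := h₂.1.2
  -- Step 1: good approximating reparametrizations
  have step1 : ∀ n : ℕ, ∃ p : ℝ × ℝ, (p.1 = 1 ∨ p.1 = -1) ∧ p.2 ∈ Set.Icc (0:ℝ) 1 ∧
      ∀ s : ℝ, dist (γ₁ s) (γ₂ (p.1 * s + p.2)) < 1 / (n + 1) := by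
    intro n
    have hlt : sInf (dSet γ₁ γ₂) < 1 / (n + 1) := by
      rw [← deltaDist_eq, h]; positivity
    obtain ⟨r, ⟨g₁, g₂, hg₁, hg₂, rfl⟩, hr⟩ :=
      exists_lt_of_csInf_lt (dSet_nonempty γ₁ γ₂) hlt
    obtain ⟨ε₁, c₁, hε₁, hu₁⟩ := hg₁
    obtain ⟨ε₂, c₂, hε₂, hu₂⟩ := hg₂
    have hptwise : ∀ t, dist (g₁ t) (g₂ t) < 1 / (n + 1) := fun t =>
      lt_of_le_of_lt (dist_le_dC1 (niceFacts_of_rel h₁ ⟨ε₁, c₁, hε₁, hu₁⟩)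
        (niceFacts_of_rel h₂ ⟨ε₂, c₂, hε₂, hu₂⟩) t) hr
    set ε : ℝ := ε₂ * ε₁ with hε_def
    set d₀ : ℝ := c₂ - ε₂ * ε₁ * c₁ with hd₀_def
    have hε : ε = 1 ∨ ε = -1 := by
      rcases hε₁ with rfl | rfl <;> rcases hε₂ with rfl | rfl <;> simp [hε_def] <;> norm_num
    have key : ∀ s : ℝ, dist (γ₁ s) (γ₂ (ε * s + d₀)) < 1 / (n + 1) := by
      intro s
      have hsq : ε₁ * ε₁ = 1 := by rcases hε₁ with rfl | rfl <;> norm_num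
      have e1 : ε₁ * (ε₁ * (s - c₁)) + c₁ = s := by linear_combination (s - c₁) * hsq
      have e2 : ε₂ * (ε₁ * (s - c₁)) + c₂ = ε * s + d₀ := by
        rw [hε_def, hd₀_def]; ring
      have := hptwise (ε₁ * (s - c₁))
      rwa [hu₁, hu₂, e1, e2] at this
    refine ⟨(ε, Int.fract d₀), hε, ⟨Int.fract_nonneg _, (Int.fract_lt_one _).le⟩, fun s => ?_⟩
    have : γ₂ (ε * s + Int.fract d₀) = γ₂ (ε * s + d₀) := by
      have : ε * s + d₀ = (ε * s + Int.fract d₀) + (⌊d₀⌋ : ℝ) := by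
        rw [Int.fract]; ring
      rw [this, periodic_int hper₂]
    rw [this]
    exact key s
  choose p hpε hpd hp using step1
  -- Step 2: compactness
  have hK : IsCompact (({1, -1} : Set ℝ) ×ˢ Set.Icc (0:ℝ) 1) :=
    (Set.toFinite _).isCompact.prod isCompact_Icc
  have hmem : ∀ n, p n ∈ ({1, -1} : Set ℝ) ×ˢ Set.Icc (0:ℝ) 1 := by
    intro n
    exact ⟨by rcases hpε n with h' | h' <;> simp [h'], hpd n⟩
  obtain ⟨⟨ε, d⟩, haK, φ, hφ, hlim⟩ := hK.tendsto_subseq hmem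
  -- Step 3: pass to the limit
  refine ⟨ε, d, ?_, fun s => ?_⟩
  · rcases haK.1 with h' | h'
    · exact Or.inl h'
    · exact Or.inr h'
  · have hcont : Continuous fun q : ℝ × ℝ => γ₂ (q.1 * s + q.2) :=
      h₂.1.1.continuous.comp (by continuity)
    have hlim2 : Tendsto (fun n => γ₂ ((p (φ n)).1 * s + (p (φ n)).2)) atTop
        (𝓝 (γ₂ (ε * s + d))) := (hcont.tendsto _).comp hlim
    have hdist0 : Tendsto (fun n => dist (γ₁ s) (γ₂ ((p (φ n)).1 * s + (p (φ n)).2)))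
        atTop (𝓝 0) := by
      have hb : ∀ n, dist (γ₁ s) (γ₂ ((p (φ n)).1 * s + (p (φ n)).2)) ≤ 1 / (n + 1) := by
        intro n
        refine (hp (φ n) s).le.trans ?_
        have hn : n ≤ φ n := hφ.le_apply
        have : (n : ℝ) + 1 ≤ (φ n : ℝ) + 1 := by push_cast; exact_mod_cast by omega
        gcongr
      refine squeeze_zero (fun n => dist_nonneg) hb tendsto_one_div_add_atTop_nhds_zero_nat
    have hdistlim : Tendsto (fun n => dist (γ₁ s) (γ₂ ((p (φ n)).1 * s + (p (φ n)).2)))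
        atTop (𝓝 (dist (γ₁ s) (γ₂ (ε * s + d)))) :=
      (continuous_const.dist continuous_id).tendsto _ |>.comp hlim2 |>.congr (fun n => rfl)
    have := tendsto_nhds_unique hdistlim hdist0
    exact dist_eq_zero.mp this

lemma delta_complete (γs : ℕ → ℝ → E) (hN : ∀ k, InN (γs k))
    (hC : ∀ ε : ℝ, 0 < ε → ∃ K : ℕ, ∀ p ≥ K, ∀ q ≥ K, deltaDist (γs p) (γs q) < ε) :
    ∃ γ : ℝ → E, InN γ ∧ Tendsto (fun k => deltaDist (γs k) γ) atTop (𝓝 0) := by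
  choose K hK using fun k : ℕ => hC ((1/2 : ℝ)^k) (by positivity)
  -- (a) nested index sequence
  let n : ℕ → ℕ := fun k => Nat.rec (K 0) (fun k nk => max nk (K (k+1))) k
  have hn_succ : ∀ k, n (k+1) = max (n k) (K (k+1)) := fun k => rfl
  have hn_mono : Monotone n := monotone_nat_of_le_succ fun k => by rw [hn_succ]; exact le_max_left _ _
  have hnK : ∀ k, K k ≤ n k := by
    intro k
    cases k with
    | zero => exact le_rfl
    | succ k => rw [hn_succ]; exact le_max_right _ _
  have hδ : ∀ k, deltaDist (γs (n k)) (γs (n (k+1))) < (1/2 : ℝ)^k :=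
    fun k => hK k (n k) (hnK k) (n (k+1)) ((hnK k).trans (hn_mono (Nat.le_succ k)))
  -- (b) recursive choice of aligned representatives
  have step : ∀ k (g : ℝ → E), LoopRel g (γs (n k)) →
      ∃ g', LoopRel g' (γs (n (k+1))) ∧ dC1 g g' < (1/2 : ℝ)^k := by
    intro k g hg
    have hlt : sInf (dSet (γs (n k)) (γs (n (k+1)))) < (1/2 : ℝ)^k := hδ k
    obtain ⟨r, ⟨a, b, ha, hb, rfl⟩, hr⟩ := exists_lt_of_csInf_lt (dSet_nonempty _ _) hlt
    obtain ⟨ε, c, hε, hu⟩ : LoopRel g a := rel_trans hg (rel_symm ha)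
    refine ⟨fun t => b (ε * t + c), rel_trans ⟨ε, c, hε, fun _ => rfl⟩ hb, ?_⟩
    have hge : g = fun t => a (ε * t + c) := funext hu
    rw [hge, dC1_reparam (niceFacts_of_rel (hN (n k)) ha)
      (niceFacts_of_rel (hN (n (k+1))) hb) hε c]
    exact hr
  have step' : ∀ k (g : ℝ → E), ∃ g', LoopRel g (γs (n k)) →
      LoopRel g' (γs (n (k+1))) ∧ dC1 g g' < (1/2 : ℝ)^k := by
    intro k g
    by_cases hg : LoopRel g (γs (n k))
    · obtain ⟨g', h1, h2⟩ := step k g hg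
      exact ⟨g', fun _ => ⟨h1, h2⟩⟩
    · exact ⟨g, fun hg' => absurd hg' hg⟩
  choose F hF using step'
  let h : ℕ → ℝ → E := fun k => Nat.rec (γs (n 0)) (fun k g => F k g) k
  have hh_succ : ∀ k, h (k+1) = F k (h k) := fun k => rfl
  have hrel : ∀ k, LoopRel (h k) (γs (n k)) := by
    intro k
    induction k with
    | zero => exact rel_refl _
    | succ k ih => rw [hh_succ]; exact (hF k (h k) ih).1
  have hstep : ∀ k, dC1 (h k) (h (k+1)) < (1/2 : ℝ)^k := by
    intro k
    rw [hh_succ]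
    exact (hF k (h k) (hrel k)).2
  have hnice : ∀ k, NiceFacts (h k) := fun k => niceFacts_of_rel (hN (n k)) (hrel k)
  -- (c) geometric distance bounds
  have hdd : ∀ k t, dist (h k t) (h (k+1) t) ≤ (1/2 : ℝ)^k :=
    fun k t => (dist_le_dC1 (hnice k) (hnice (k+1)) t).trans (hstep k).le
  have hdd' : ∀ k t, dist (deriv (h k) t) (deriv (h (k+1)) t) ≤ (1/2 : ℝ)^k :=
    fun k t => (dist_deriv_le_dC1 (hnice k) (hnice (k+1)) t).trans (hstep k).le
  have hbound : ∀ p q, p ≤ q → ∀ t,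
      dist (h p t) (h q t) ≤ 2*(1/2 : ℝ)^p - 2*(1/2 : ℝ)^q ∧
      dist (deriv (h p) t) (deriv (h q) t) ≤ 2*(1/2 : ℝ)^p - 2*(1/2 : ℝ)^q := by
    intro p q hpq
    induction q, hpq using Nat.le_induction with
    | base => intro t; simp
    | succ q hpq ih =>
      intro t
      have e : 2*(1/2 : ℝ)^(q+1) = (1/2 : ℝ)^q := by ring
      constructor
      · calc dist (h p t) (h (q+1) t)
            ≤ dist (h p t) (h q t) + dist (h q t) (h (q+1) t) := dist_triangle _ _ _
          _ ≤ (2*(1/2 : ℝ)^p - 2*(1/2 : ℝ)^q) + (1/2 : ℝ)^q :=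
              add_le_add (ih t).1 (hdd q t)
          _ ≤ 2*(1/2 : ℝ)^p - 2*(1/2 : ℝ)^(q+1) := by rw [e]; linarith [pow_nonneg (by norm_num : (0:ℝ) ≤ 1/2) q]
      · calc dist (deriv (h p) t) (deriv (h (q+1)) t)
            ≤ dist (deriv (h p) t) (deriv (h q) t) + dist (deriv (h q) t) (deriv (h (q+1)) t) :=
              dist_triangle _ _ _
          _ ≤ (2*(1/2 : ℝ)^p - 2*(1/2 : ℝ)^q) + (1/2 : ℝ)^q :=
              add_le_add (ih t).2 (hdd' q t)
          _ ≤ 2*(1/2 : ℝ)^p - 2*(1/2 : ℝ)^(q+1) := by rw [e]; linarith [pow_nonneg (by norm_num : (0:ℝ) ≤ 1/2) q]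
  -- (d) pointwise limits
  have hcv : ∀ t, ∃ y : E, Tendsto (fun k => h k t) atTop (𝓝 y) := by
    intro t
    refine cauchySeq_tendsto_of_complete
      (cauchySeq_of_le_geometric (1/2) 1 (by norm_num) fun k => ?_)
    simpa using hdd k t
  have hcv' : ∀ t, ∃ y : E, Tendsto (fun k => deriv (h k) t) atTop (𝓝 y) := by
    intro t
    refine cauchySeq_tendsto_of_complete
      (cauchySeq_of_le_geometric (1/2) 1 (by norm_num) fun k => ?_)
    simpa using hdd' k t
  choose γ hγ using hcv
  choose φ hφ using hcv'
  -- (e) uniform bounds for the limit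
  have hub : ∀ p t, dist (h p t) (γ t) ≤ 2*(1/2 : ℝ)^p := by
    intro p t
    have hl : Tendsto (fun q => dist (h p t) (h q t)) atTop (𝓝 (dist (h p t) (γ t))) :=
      ((continuous_const.dist continuous_id).tendsto _).comp (hγ t)
    refine le_of_tendsto hl ?_
    filter_upwards [eventually_ge_atTop p] with q hq
    have := (hbound p q hq t).1
    nlinarith [pow_nonneg (by norm_num : (0:ℝ) ≤ 1/2) q]
  have hub' : ∀ p t, dist (deriv (h p) t) (φ t) ≤ 2*(1/2 : ℝ)^p := by
    intro p t
    have hl : Tendsto (fun q => dist (deriv (h p) t) (deriv (h q) t)) atTop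
        (𝓝 (dist (deriv (h p) t) (φ t))) :=
      ((continuous_const.dist continuous_id).tendsto _).comp (hφ t)
    refine le_of_tendsto hl ?_
    filter_upwards [eventually_ge_atTop p] with q hq
    have := (hbound p q hq t).2
    nlinarith [pow_nonneg (by norm_num : (0:ℝ) ≤ 1/2) q]
  -- (f) uniform convergence of derivatives
  have huc : TendstoUniformly (fun k t => deriv (h k) t) φ atTop := by
    rw [Metric.tendstoUniformly_iff]
    intro ε hε
    obtain ⟨N, hNlt⟩ := exists_pow_lt_of_lt_one (by positivity : (0:ℝ) < ε/2) (by norm_num : (1/2 : ℝ) < 1)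
    filter_upwards [eventually_ge_atTop N] with k hk t
    have h1 : (1/2 : ℝ)^k ≤ (1/2 : ℝ)^N := pow_le_pow_of_le_one (by norm_num) (by norm_num) hk
    calc dist (φ t) (deriv (h k) t) = dist (deriv (h k) t) (φ t) := dist_comm _ _
      _ ≤ 2*(1/2 : ℝ)^k := hub' k t
      _ ≤ 2*(1/2 : ℝ)^N := by linarith
      _ < ε := by linarith
  -- (g) the limit has derivative φ
  have hder : ∀ t, HasDerivAt γ (φ t) t := by
    refine fun t => hasDerivAt_of_tendstoUniformly huc ?_ hγ t
    filter_upwards with k x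
    exact ((hnice k).diff x).hasDerivAt
  have hderiv_eq : deriv γ = φ := funext fun t => (hder t).deriv
  -- (h) γ ∈ N
  have hφcont : Continuous φ :=
    huc.continuous (Eventually.of_forall fun k => (hnice k).contDeriv).frequently
  have hInN : InN γ := by
    refine ⟨⟨?_, ?_⟩, ?_⟩
    · rw [contDiff_one_iff_deriv]
      exact ⟨fun t => (hder t).differentiableAt, by rw [hderiv_eq]; exact hφcont⟩
    · intro t
      exact tendsto_nhds_unique
        (((hγ (t+1)).congr fun k => ((hnice k).per t).symm ▸ rfl) : Tendsto (fun k => h k t) atTop (𝓝 (γ (t+1)))) (hγ t)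
    · intro t
      rw [hderiv_eq]
      have h1 : Tendsto (fun k => ‖deriv (h k) t‖) atTop (𝓝 ‖φ t‖) :=
        (continuous_norm.tendsto _).comp (hφ t)
      have h2 : Tendsto (fun k => ‖deriv (h k) t‖) atTop (𝓝 1) :=
        Tendsto.congr (fun k => ((hnice k).unit t).symm) tendsto_const_nhds
      exact tendsto_nhds_unique h1 h2
  -- (i) δ(γs (n k), γ) ≤ 4 (1/2)^k
  have hδlim : ∀ k, deltaDist (γs (n k)) γ ≤ 4*(1/2 : ℝ)^k := by
    intro k
    refine (delta_le (hrel k) (rel_refl γ)).trans ?_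
    have := dC1_le (g₁ := h k) (g₂ := γ) (A := 2*(1/2 : ℝ)^k) (B := 2*(1/2 : ℝ)^k)
      (by positivity) (by positivity) (fun t => hub k t) (fun t => by rw [hderiv_eq]; exact hub' k t)
    linarith [this]
  -- (j) conclusion
  refine ⟨γ, hInN, ?_⟩
  rw [Metric.tendsto_atTop]
  intro ε hε
  obtain ⟨j, hj⟩ := exists_pow_lt_of_lt_one (by positivity : (0:ℝ) < ε/5) (by norm_num : (1/2 : ℝ) < 1)
  refine ⟨K j, fun k hk => ?_⟩
  have htri : deltaDist (γs k) γ ≤ deltaDist (γs k) (γs (n j)) + deltaDist (γs (n j)) γ :=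
    delta_triangle (hN k) (hN (n j)) hInN
  have h1 : deltaDist (γs k) (γs (n j)) < (1/2 : ℝ)^j := hK j k hk (n j) (hnK j)
  have h2 : deltaDist (γs (n j)) γ ≤ 4*(1/2 : ℝ)^j := hδlim j
  have h3 : deltaDist (γs k) γ < 5*(1/2 : ℝ)^j := by linarith
  rw [Real.dist_eq, sub_zero, abs_of_nonneg (delta_nonneg _ _)]
  linarith

/-- `δ` is a distance on `L = N/∼` (it is well defined on classes, nonnegative,
symmetric, satisfies the triangle inequality, and `δ(ℓ₁, ℓ₂) = 0` implies `ℓ₁ = ℓ₂`),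
and the metric space `(L, δ)` is complete. -/
theorem stmt4 :
    (∀ γ₁ γ₁' γ₂ : ℝ → EuclideanSpace ℝ (Fin 2), InN γ₁ → InN γ₂ → LoopRel γ₁ γ₁' →
      deltaDist γ₁ γ₂ = deltaDist γ₁' γ₂) ∧
    (∀ γ₁ γ₂ : ℝ → EuclideanSpace ℝ (Fin 2), InN γ₁ → InN γ₂ →
      0 ≤ deltaDist γ₁ γ₂) ∧
    (∀ γ : ℝ → EuclideanSpace ℝ (Fin 2), InN γ → deltaDist γ γ = 0) ∧
    (∀ γ₁ γ₂ : ℝ → EuclideanSpace ℝ (Fin 2), InN γ₁ → InN γ₂ →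
      deltaDist γ₁ γ₂ = deltaDist γ₂ γ₁) ∧
    (∀ γ₁ γ₂ γ₃ : ℝ → EuclideanSpace ℝ (Fin 2), InN γ₁ → InN γ₂ → InN γ₃ →
      deltaDist γ₁ γ₃ ≤ deltaDist γ₁ γ₂ + deltaDist γ₂ γ₃) ∧
    (∀ γ₁ γ₂ : ℝ → EuclideanSpace ℝ (Fin 2), InN γ₁ → InN γ₂ →
      deltaDist γ₁ γ₂ = 0 → LoopRel γ₁ γ₂) ∧
    (∀ γs : ℕ → ℝ → EuclideanSpace ℝ (Fin 2),
      (∀ k, InN (γs k)) →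
      (∀ ε : ℝ, 0 < ε → ∃ K : ℕ, ∀ p ≥ K, ∀ q ≥ K, deltaDist (γs p) (γs q) < ε) →
      ∃ γ : ℝ → EuclideanSpace ℝ (Fin 2), InN γ ∧
        Tendsto (fun k => deltaDist (γs k) γ) atTop (𝓝 0)) := by
  refine ⟨fun γ₁ γ₁' γ₂ _ _ h => delta_welldef h,
    fun γ₁ γ₂ _ _ => delta_nonneg _ _,
    fun γ _ => delta_self _,
    fun γ₁ γ₂ _ _ => delta_comm _ _,
    fun γ₁ γ₂ γ₃ h1 h2 h3 => delta_triangle h1 h2 h3,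
    fun γ₁ γ₂ h1 h2 h => delta_zero_rel h1 h2 h,
    fun γs h1 h2 => delta_complete γs h1 h2⟩
end

section
/- Let γ ∈ N be injective. Then there exists ε > 0 such that every γ̃ ∈ N with ‖γ̃ − γ‖ < ε is also injective. In other words, the set of injective unit-speed C¹ loops is open in N for the C¹ topology. -/
/-- Injectivity of a 1-periodic loop as a map on the circle `ℝ/ℤ`. -/
def InjLoop (γ : ℝ → EuclideanSpace ℝ (Fin 2)) : Prop :=
  ∀ s t : ℝ, γ s = γ t → ∃ k : ℤ, s - t = (k : ℝ)

section Aux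

local notation "E" => EuclideanSpace ℝ (Fin 2)

/-- The derivative of a 1-periodic function is 1-periodic. -/
lemma aux_periodic_deriv {f : ℝ → E} (hp : Function.Periodic f 1) :
    Function.Periodic (deriv f) 1 := by
  intro t
  have h : (fun x => f (x + 1)) = f := funext fun x => hp x
  calc deriv f (t + 1) = deriv (fun x => f (x + 1)) t := (deriv_comp_add_const f 1 t).symm
    _ = deriv f t := by rw [h]

/-- A continuous 1-periodic real function has bounded range. -/
lemma aux_bdd {f : ℝ → ℝ} (hc : Continuous f) (hp : Function.Periodic f 1) :
    BddAbove (Set.range f) := by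
  have hsub : Set.range f ⊆ f '' Set.Icc (0 : ℝ) 1 := by
    rintro _ ⟨t, rfl⟩
    refine ⟨t - ⌊t⌋, ⟨by linarith [Int.floor_le t], by linarith [Int.lt_floor_add_one t]⟩, ?_⟩
    have h := hp.sub_int_mul_eq (x := t) ⌊t⌋
    rw [mul_one] at h
    exact h
  exact ((isCompact_Icc.image hc).bddAbove).mono hsub

/-- Key local injectivity lemma: a unit-speed `C¹` curve whose derivative varies
by at most `1/2` on `[a, b]` satisfies `γ' b ≠ γ' a`. -/
lemma aux_near {f : ℝ → E} (hc : ContDiff ℝ 1 f)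
    (hunit : ∀ t, ‖deriv f t‖ = 1) {a b : ℝ} (hab : a < b)
    (hclose : ∀ u ∈ Set.Icc a b, ‖deriv f u - deriv f a‖ ≤ 1 / 2) :
    f b ≠ f a := by
  set v := deriv f a with hv
  have hdiff : Differentiable ℝ f := hc.differentiable (by norm_num)
  have hcd : Continuous (deriv f) := hc.continuous_deriv le_rfl
  have hint : IntervalIntegrable (deriv f) MeasureTheory.volume a b :=
    hcd.intervalIntegrable a b
  have hftc : (∫ u in a..b, deriv f u) = f b - f a :=
    intervalIntegral.integral_deriv_eq_sub (fun u _ => hdiff.differentiableAt) hint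
  have h1 : (∫ u in a..b, (inner ℝ v (deriv f u) : ℝ)) = inner ℝ v (f b - f a) := by
    have := (innerSL ℝ v).intervalIntegral_comp_comm hint
    simpa [hftc] using this
  have hlow : ∀ u ∈ Set.Icc a b, (1 : ℝ) / 2 ≤ (inner ℝ v (deriv f u) : ℝ) := by
    intro u hu
    have hsplit : (inner ℝ v (deriv f u) : ℝ)
        = (inner ℝ v v : ℝ) + inner ℝ v (deriv f u - v) := by
      rw [inner_sub_right]; ring
    have hvv : (inner ℝ v v : ℝ) = 1 := by
      rw [real_inner_self_eq_norm_sq, hv, hunit a]; norm_num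
    have habs : |(inner ℝ v (deriv f u - v) : ℝ)| ≤ 1 / 2 := by
      have h1 := abs_real_inner_le_norm v (deriv f u - v)
      have h2 := hclose u hu
      have h3 : ‖v‖ = 1 := hunit a
      calc |(inner ℝ v (deriv f u - v) : ℝ)| ≤ ‖v‖ * ‖deriv f u - v‖ := h1
        _ ≤ 1 * (1 / 2) := by rw [h3]; simpa [hv] using h2
        _ = 1 / 2 := by norm_num
    have := (abs_le.1 habs).1
    rw [hsplit, hvv]; linarith
  have hcont : Continuous fun u => (inner ℝ v (deriv f u) : ℝ) :=
    continuous_const.inner hcd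
  have hmono : (∫ _ in a..b, (1 : ℝ) / 2) ≤ ∫ u in a..b, (inner ℝ v (deriv f u) : ℝ) :=
    intervalIntegral.integral_mono_on hab.le intervalIntegrable_const
      (hcont.intervalIntegrable a b) hlow
  have hconst : (∫ _ in a..b, (1 : ℝ) / 2) = (b - a) * (1 / 2) := by
    simp [intervalIntegral.integral_const, smul_eq_mul]
  intro heq
  rw [h1, heq, sub_self, inner_zero_right, hconst] at hmono
  nlinarith

end Aux

/-- The set of injective unit-speed `C¹` loops is open in `N` for the `C¹` topology:
any loop `C¹`-close enough to an injective one is injective. -/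
theorem stmt5 (γ : ℝ → EuclideanSpace ℝ (Fin 2)) (hγ : InN γ) (hinj : InjLoop γ) :
    ∃ ε : ℝ, 0 < ε ∧ ∀ γ' : ℝ → EuclideanSpace ℝ (Fin 2),
      InN γ' → dC1 γ' γ < ε → InjLoop γ' := by
  obtain ⟨⟨hγc, hγp⟩, hγu⟩ := hγ
  have hdc : Continuous (deriv γ) := hγc.continuous_deriv le_rfl
  have hdp : Function.Periodic (deriv γ) 1 := aux_periodic_deriv hγp
  -- uniform continuity of deriv γ on a compact interval
  have hK : IsCompact (Set.Icc (-1 : ℝ) 2) := isCompact_Icc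
  have hUC : UniformContinuousOn (deriv γ) (Set.Icc (-1 : ℝ) 2) :=
    hK.uniformContinuousOn_of_continuous hdc.continuousOn
  obtain ⟨δ₀, hδ₀pos, hδ₀⟩ := (Metric.uniformContinuousOn_iff_le.1 hUC) (1/4) (by norm_num)
  set δ : ℝ := min δ₀ (1/4) with hδdef
  have hδpos : 0 < δ := lt_min hδ₀pos (by norm_num)
  have hδle : δ ≤ 1/4 := min_le_right _ _
  -- key uniform estimate : |u - t| ≤ δ → ‖deriv γ u - deriv γ t‖ ≤ 1/4
  have hmod : ∀ t u : ℝ, |u - t| ≤ δ → ‖deriv γ u - deriv γ t‖ ≤ 1/4 := by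
    intro t u h
    have hf : (0:ℝ) ≤ t - ⌊t⌋ := by linarith [Int.floor_le t]
    have hf1 : t - ⌊t⌋ < 1 := by linarith [Int.lt_floor_add_one t]
    have hmem1 : t - ⌊t⌋ ∈ Set.Icc (-1:ℝ) 2 := ⟨by linarith, by linarith⟩
    have habs : |u - t| ≤ 1/4 := le_trans h hδle
    have h2 := abs_le.1 habs
    have hmem2 : u - ⌊t⌋ ∈ Set.Icc (-1:ℝ) 2 :=
      ⟨by linarith [h2.1], by linarith [h2.2]⟩
    have e1 : deriv γ (u - ⌊t⌋) = deriv γ u := by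
      have h' := hdp.sub_int_mul_eq (x := u) ⌊t⌋; rw [mul_one] at h'; exact h'
    have e2 : deriv γ (t - ⌊t⌋) = deriv γ t := by
      have h' := hdp.sub_int_mul_eq (x := t) ⌊t⌋; rw [mul_one] at h'; exact h'
    have hdist : dist (u - (⌊t⌋:ℝ)) (t - ⌊t⌋) ≤ δ := by
      rw [Real.dist_eq, show u - (⌊t⌋:ℝ) - (t - ⌊t⌋) = u - t by ring]; exact h
    have := hδ₀ _ hmem2 _ hmem1 (le_trans hdist (min_le_left _ _))
    rw [e1, e2] at this
    simpa [dist_eq_norm] using this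
  -- minimum separation m for "far" pairs
  set K : Set (ℝ × ℝ) := Set.Icc (0:ℝ) 1 ×ˢ Set.Icc δ (1 - δ) with hKdef
  have hKc : IsCompact K := isCompact_Icc.prod isCompact_Icc
  have hKne : K.Nonempty := ⟨(0, δ), ⟨le_refl 0, zero_le_one⟩, le_refl δ, by linarith⟩
  have hFc : Continuous fun p : ℝ × ℝ => ‖γ p.1 - γ (p.1 + p.2)‖ := by
    exact (hγc.continuous.comp continuous_fst |>.sub
      (hγc.continuous.comp (continuous_fst.add continuous_snd))).norm
  obtain ⟨p₀, hp₀K, hp₀min⟩ := hKc.exists_isMinOn hKne hFc.continuousOn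
  set m : ℝ := ‖γ p₀.1 - γ (p₀.1 + p₀.2)‖ with hmdef
  have hmpos : 0 < m := by
    rcases hp₀K with ⟨_, hr⟩
    have hr1 : δ ≤ p₀.2 := hr.1
    have hr2 : p₀.2 ≤ 1 - δ := hr.2
    rw [hmdef, norm_pos_iff, sub_ne_zero]
    intro heq
    obtain ⟨k, hk⟩ := hinj _ _ heq
    have hk' : (k : ℝ) = -p₀.2 := by linarith [hk]
    have h1 : (-1 : ℝ) < (k:ℝ) := by rw [hk']; linarith
    have h2 : (k:ℝ) < 0 := by rw [hk']; linarith
    have h1' : (-1 : ℤ) < k := by exact_mod_cast h1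
    have h2' : k < 0 := by exact_mod_cast h2
    omega
  -- far bound for all t
  have hfar : ∀ t r : ℝ, r ∈ Set.Icc δ (1 - δ) → m ≤ ‖γ t - γ (t + r)‖ := by
    intro t r hr
    have hf : (0:ℝ) ≤ t - ⌊t⌋ := by linarith [Int.floor_le t]
    have hf1 : t - ⌊t⌋ < 1 := by linarith [Int.lt_floor_add_one t]
    have hmem : ((t - ⌊t⌋ : ℝ), r) ∈ K := ⟨⟨hf, hf1.le⟩, hr⟩
    have e1 : γ (t - ⌊t⌋) = γ t := by
      have h' := hγp.sub_int_mul_eq (x := t) ⌊t⌋; rw [mul_one] at h'; exact h'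
    have e2 : γ (t - ⌊t⌋ + r) = γ (t + r) := by
      have h' := hγp.sub_int_mul_eq (x := t + r) ⌊t⌋
      rw [mul_one] at h'
      rw [show t - (⌊t⌋:ℝ) + r = t + r - ⌊t⌋ by ring]
      exact h'
    have hmin := hp₀min hmem
    simp only [hKdef] at hmin
    calc m ≤ ‖γ (t - ⌊t⌋) - γ (t - ⌊t⌋ + r)‖ := hmin
      _ = ‖γ t - γ (t + r)‖ := by rw [e1, e2]
  -- choose ε
  refine ⟨min (1/8) (m/3), lt_min (by norm_num) (by linarith), ?_⟩
  intro γ' ⟨⟨hc', hp'⟩, hu'⟩ hdist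
  set ε : ℝ := min (1/8) (m/3) with hεdef
  have hε8 : ε ≤ 1/8 := min_le_left _ _
  have hεm : ε ≤ m/3 := min_le_right _ _
  -- pointwise bounds from dC1 < ε
  have hS1nn : (0:ℝ) ≤ ⨆ t : ℝ, dist (deriv γ' t) (deriv γ t) :=
    Real.iSup_nonneg fun t => dist_nonneg
  have hS0nn : (0:ℝ) ≤ ⨆ t : ℝ, dist (γ' t) (γ t) :=
    Real.iSup_nonneg fun t => dist_nonneg
  have hbdd0 : BddAbove (Set.range fun t => dist (γ' t) (γ t)) :=
    aux_bdd (hc'.continuous.dist hγc.continuous)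
      (fun t => by show dist (γ' (t + 1)) (γ (t + 1)) = _; rw [hp' t, hγp t])
  have hbdd1 : BddAbove (Set.range fun t => dist (deriv γ' t) (deriv γ t)) :=
    aux_bdd ((hc'.continuous_deriv le_rfl).dist hdc)
      (fun t => by
        show dist (deriv γ' (t + 1)) (deriv γ (t + 1)) = _
        rw [aux_periodic_deriv hp' t, hdp t])
  have hd0 : ∀ t, dist (γ' t) (γ t) < ε := by
    intro t
    have h1 : dist (γ' t) (γ t) ≤ ⨆ t : ℝ, dist (γ' t) (γ t) := le_ciSup hbdd0 t
    have h2 : dC1 γ' γ < ε := hdist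
    rw [dC1] at h2
    linarith
  have hd1 : ∀ t, dist (deriv γ' t) (deriv γ t) < ε := by
    intro t
    have h1 : dist (deriv γ' t) (deriv γ t)
        ≤ ⨆ t : ℝ, dist (deriv γ' t) (deriv γ t) := le_ciSup hbdd1 t
    have h2 : dC1 γ' γ < ε := hdist
    rw [dC1] at h2
    linarith
  -- local injectivity of γ'
  have hnear : ∀ a b : ℝ, a < b → b ≤ a + δ → γ' b ≠ γ' a := by
    intro a b h1 h2
    apply aux_near hc' hu' h1
    intro u hu
    have habs : |u - a| ≤ δ := by
      rw [abs_le]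
      constructor
      · linarith [hu.1, hδpos.le]
      · linarith [hu.2]
    have e : deriv γ' u - deriv γ' a = (deriv γ' u - deriv γ u)
        + (deriv γ u - deriv γ a) + (deriv γ a - deriv γ' a) := by abel
    have c1 : ‖deriv γ' u - deriv γ u‖ ≤ ε := by
      rw [← dist_eq_norm]; exact (hd1 u).le
    have c2 : ‖deriv γ u - deriv γ a‖ ≤ 1/4 := hmod a u habs
    have c3 : ‖deriv γ a - deriv γ' a‖ ≤ ε := by
      rw [← dist_eq_norm, dist_comm]; exact (hd1 a).le
    calc ‖deriv γ' u - deriv γ' a‖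
        ≤ ‖deriv γ' u - deriv γ u‖ + ‖deriv γ u - deriv γ a‖
          + ‖deriv γ a - deriv γ' a‖ := by
          rw [e]; exact norm_add₃_le
      _ ≤ ε + 1/4 + ε := by linarith
      _ ≤ 1/2 := by linarith
  -- conclude
  intro s t heq
  set n : ℤ := ⌊s - t⌋ with hn
  set r : ℝ := s - t - n with hrdef
  by_cases hr0 : r = 0
  · exact ⟨n, by linarith [hr0, hrdef]⟩
  exfalso
  have hr1 : 0 ≤ r := by
    rw [hrdef, hn]; linarith [Int.floor_le (s - t)]
  have hr2 : r < 1 := by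
    rw [hrdef, hn]; linarith [Int.lt_floor_add_one (s - t)]
  have hrpos : 0 < r := lt_of_le_of_ne hr1 (Ne.symm hr0)
  have heq2 : γ' (t + r) = γ' t := by
    have e1 : t + r = s - n * 1 := by rw [hrdef]; ring
    have e2 : γ' (s - (n:ℝ) * 1) = γ' s := hp'.sub_int_mul_eq (x := s) n
    rw [e1, e2, heq]
  rcases le_or_gt r δ with hcase | hcase
  · exact hnear t (t + r) (by linarith) (by linarith) heq2
  rcases le_or_gt (1 - δ) r with hcase2 | hcase2
  · have heq3 : γ' (t + 1) = γ' (t + r) := by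
      rw [heq2]; exact hp' t
    exact hnear (t + r) (t + 1) (by linarith) (by linarith) heq3
  · have hfarb := hfar t r ⟨hcase.le, hcase2.le⟩
    have b1 : dist (γ t) (γ' t) ≤ ε := by rw [dist_comm]; exact (hd0 t).le
    have b2 : dist (γ' (t + r)) (γ (t + r)) ≤ ε := (hd0 (t + r)).le
    have tri : ‖γ t - γ (t + r)‖
        ≤ dist (γ t) (γ' t) + dist (γ' t) (γ' (t + r)) + dist (γ' (t + r)) (γ (t + r)) := by
      rw [← dist_eq_norm]
      exact dist_triangle4 _ _ _ _
    have hzero : dist (γ' t) (γ' (t + r)) = 0 := by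
      rw [heq2]; simp
    rw [hzero] at tri
    linarith
end

section
/- Let ℓ₂ : ℝⁿ → ℝ be a C² function and let x₀ ∈ ℝⁿ be a nondegenerate critical point of ℓ₂, i.e. Dℓ₂(x₀) = 0 and the second derivative D²ℓ₂(x₀) is an invertible bilinear form. Then for every sufficiently small r > 0 there exists ε > 0 such that every C¹ function ℓ : ℝⁿ → ℝ satisfying sup_{x ∈ closedBall(x₀, r)} ‖Dℓ(x) − Dℓ₂(x)‖ < ε has at least one critical point in the open ball of radius r around x₀ (a point x with Dℓ(x) = 0). -/
open Metric MeasureTheory Set Filter Polynomial RealInnerProductSpace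


section Helpers

variable {V : Type*} [NormedAddCommGroup V] [NormedSpace ℝ V] [FiniteDimensional ℝ V]

theorem clm_det_continuous : Continuous fun A : V →L[ℝ] V => A.det := by
  classical
  let b := Module.finBasis ℝ V
  have h1 : Continuous fun A : V →L[ℝ] V =>
      LinearMap.toMatrix b b (A : V →ₗ[ℝ] V) :=
    (((LinearMap.toMatrix b b).toLinearMap).comp
      (ContinuousLinearMap.coeLM ℝ)).continuous_of_finiteDimensional
  have h2 : Continuous fun A : V →L[ℝ] V =>
      (LinearMap.toMatrix b b (A : V →ₗ[ℝ] V)).det := h1.matrix_det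
  convert h2 using 1
  ext A
  rw [ContinuousLinearMap.det, ← LinearMap.det_toMatrix b]

theorem clm_isUnit_det_ne_zero {A : V →L[ℝ] V} (h : IsUnit A) : A.det ≠ 0 := by
  obtain ⟨u, rfl⟩ := h
  have h1 : (u : V →L[ℝ] V) * (↑u⁻¹ : V →L[ℝ] V) = 1 := u.mul_inv
  have h2 : ((u : V →L[ℝ] V)).det * ((↑u⁻¹ : V →L[ℝ] V)).det = 1 := by
    rw [ContinuousLinearMap.det, ContinuousLinearMap.det, ← LinearMap.det_comp]
    have h3 : ((u : V →L[ℝ] V) : V →ₗ[ℝ] V) ∘ₗ ((↑u⁻¹ : V →L[ℝ] V) : V →ₗ[ℝ] V)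
        = ((((u : V →L[ℝ] V) * (↑u⁻¹ : V →L[ℝ] V)) : V →L[ℝ] V) : V →ₗ[ℝ] V) := rfl
    rw [h3, h1]
    exact LinearMap.det_id
  exact left_ne_zero_of_mul_eq_one h2

theorem det_pos_of_norm_lt_one [CompleteSpace V] {A : V →L[ℝ] V} (h : ‖A‖ < 1) :
    0 < (ContinuousLinearMap.id ℝ V + A).det := by
  set g : ℝ → ℝ := fun s => ((1 : V →L[ℝ] V) + s • A).det with hg
  have hunit : ∀ s : ℝ, s ∈ Icc (0:ℝ) 1 → IsUnit ((1 : V →L[ℝ] V) + s • A) := by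
    intro s hs
    have hn : ‖-(s • A)‖ < 1 := by
      rw [norm_neg]
      have h1 : ‖s • A‖ = ‖s‖ * ‖A‖ := norm_smul s A
      rw [h1]
      calc ‖s‖ * ‖A‖ ≤ 1 * ‖A‖ := by
            apply mul_le_mul_of_nonneg_right _ (norm_nonneg A)
            rw [Real.norm_eq_abs, abs_le]; constructor <;> linarith [hs.1, hs.2]
        _ < 1 := by rwa [one_mul]
    have := (Units.oneSub (-(s • A)) hn).isUnit
    simpa using this
  have hgne : ∀ s : ℝ, s ∈ Icc (0:ℝ) 1 → g s ≠ 0 := fun s hs =>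
    clm_isUnit_det_ne_zero (hunit s hs)
  have hgc : Continuous g := by
    apply clm_det_continuous.comp
    exact continuous_const.add (continuous_id.smul continuous_const)
  have hg0 : g 0 = 1 := by
    simp only [hg, zero_smul, add_zero]
    rw [ContinuousLinearMap.det]
    exact LinearMap.det_id
  have hid : (ContinuousLinearMap.id ℝ V + A).det = g 1 := by
    simp [hg, ContinuousLinearMap.one_def]
  rw [hid]
  by_contra hle
  push_neg at hle
  rcases lt_or_eq_of_le hle with hlt | heq
  · have : (0:ℝ) ∈ Icc (g 1) (g 0) := by constructor <;> linarith
    have hsub := intermediate_value_Icc' (le_of_lt one_pos) hgc.continuousOn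
    obtain ⟨s, hs, hgs⟩ := hsub this
    exact hgne s hs hgs
  · exact hgne 1 ⟨zero_le_one, le_refl 1⟩ heq


theorem clm_exists_equiv_of_det_ne_zero (A : V →L[ℝ] V) (h : A.det ≠ 0) :
    ∃ e : V ≃L[ℝ] V, (e : V → V) = A := by
  classical
  let b := Module.finBasis ℝ V
  have hu : IsUnit (LinearMap.toMatrix b b (A : V →ₗ[ℝ] V)).det := by
    rw [LinearMap.det_toMatrix]
    exact isUnit_iff_ne_zero.mpr h
  let le := LinearEquiv.ofIsUnitDet hu
  refine ⟨le.toContinuousLinearEquiv, ?_⟩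
  ext v
  show le.toContinuousLinearEquiv v = A v
  rw [LinearEquiv.coe_toContinuousLinearEquiv']
  have := congrFun (congrArg (fun (f : V →ₗ[ℝ] V) => (f : V → V)) (LinearEquiv.coe_ofIsUnitDet hu)) v
  exact this

end Helpers


theorem lagrange_weights (N : ℕ) (v : Fin (N + 1) → ℝ) (hv : Function.Injective v) :
    ∃ w : Fin (N + 1) → ℝ, ∀ p : ℝ[X], p.natDegree ≤ N →
      p.eval 1 = ∑ j, w j * p.eval (v j) := by
  classical
  refine ⟨fun j => (Lagrange.basis Finset.univ v j).eval 1, fun p hp => ?_⟩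
  have hdeg : p.degree < (Finset.univ : Finset (Fin (N + 1))).card := by
    rw [Finset.card_univ, Fintype.card_fin]
    calc p.degree ≤ (p.natDegree : WithBot ℕ) := degree_le_natDegree
      _ ≤ (N : WithBot ℕ) := by exact_mod_cast hp
      _ < ((N + 1 : ℕ) : WithBot ℕ) := by exact_mod_cast Nat.lt_succ_self N
  have h := Lagrange.eq_interpolate (f := p) (Set.injOn_of_injective hv) hdeg
  conv_lhs => rw [h]
  rw [Lagrange.interpolate_apply]
  rw [eval_finset_sum]
  refine Finset.sum_congr rfl fun j _ => ?_
  rw [eval_mul, eval_C, mul_comm]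

theorem det_poly_exists {m : ℕ} (M : Matrix (Fin m) (Fin m) ℝ) :
    ∃ p : ℝ[X], p.natDegree ≤ m ∧
      ∀ t : ℝ, p.eval t = ((1 : Matrix (Fin m) (Fin m) ℝ) + t • M).det := by
  classical
  set Mp : Matrix (Fin m) (Fin m) ℝ[X] :=
    Matrix.of fun i j => C ((1 : Matrix (Fin m) (Fin m) ℝ) i j) + X * C (M i j) with hMp
  refine ⟨Mp.det, ?_, ?_⟩
  · rw [Matrix.det_apply']
    apply natDegree_sum_le_of_forall_le
    intro σ _
    calc ((↑↑(Equiv.Perm.sign σ) : ℝ[X]) * ∏ i, Mp (σ i) i).natDegree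
        ≤ (↑↑(Equiv.Perm.sign σ) : ℝ[X]).natDegree + (∏ i, Mp (σ i) i).natDegree :=
          natDegree_mul_le
      _ ≤ 0 + (∏ i, Mp (σ i) i).natDegree := by
          gcongr
          exact le_of_eq (natDegree_intCast _)
      _ = (∏ i, Mp (σ i) i).natDegree := by rw [zero_add]
      _ ≤ ∑ i, (Mp (σ i) i).natDegree := natDegree_prod_le _ _
      _ ≤ ∑ _i : Fin m, 1 := by
          apply Finset.sum_le_sum
          intro i _
          show (C ((1 : Matrix (Fin m) (Fin m) ℝ) (σ i) i) + X * C (M (σ i) i)).natDegree ≤ 1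
          calc (C ((1 : Matrix (Fin m) (Fin m) ℝ) (σ i) i) + X * C (M (σ i) i)).natDegree
              ≤ max (C ((1 : Matrix (Fin m) (Fin m) ℝ) (σ i) i)).natDegree
                  (X * C (M (σ i) i)).natDegree := natDegree_add_le _ _
            _ ≤ 1 := by
                apply max_le
                · simp
                · calc (X * C (M (σ i) i)).natDegree ≤ (X : ℝ[X]).natDegree
                        + (C (M (σ i) i)).natDegree := natDegree_mul_le
                    _ ≤ 1 + 0 := by gcongr <;> simp [natDegree_X_le]
                    _ = 1 := by norm_num
      _ = m := by simp
  · intro t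
    have h1 : Mp.det.eval t = (Polynomial.evalRingHom t) Mp.det := rfl
    have h2 : Mp.map (Polynomial.evalRingHom t) = (1 : Matrix (Fin m) (Fin m) ℝ) + t • M := by
      ext i j
      simp only [Mp, Matrix.map_apply, Matrix.of_apply, map_add, map_mul,
        coe_evalRingHom, eval_add, eval_mul, eval_C, eval_X, Matrix.add_apply, Matrix.smul_apply,
        smul_eq_mul]
    rw [h1, RingHom.map_det, RingHom.mapMatrix_apply, h2]


set_option maxHeartbeats 1000000 in
theorem no_retraction {n : ℕ} {R : ℝ} (hR : 0 < R)
    (U : Set (EuclideanSpace ℝ (Fin n))) (hU : IsOpen U)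
    (hBU : closedBall 0 R ⊆ U)
    (P : EuclideanSpace ℝ (Fin n) → EuclideanSpace ℝ (Fin n))
    (hP : ContDiffOn ℝ 1 P U)
    (hPnorm : ∀ y ∈ U, ‖P y‖ = R)
    (hPid : ∀ y : EuclideanSpace ℝ (Fin n), ‖y‖ = R → P y = y) : False := by
  classical
  set B : Set (EuclideanSpace ℝ (Fin n)) := closedBall 0 R with hB
  have hBcpt : IsCompact B := isCompact_closedBall 0 R
  have hBconv : Convex ℝ B := convex_closedBall 0 R
  -- differentiability facts
  have hPdiff : ∀ x ∈ U, HasFDerivAt P (fderiv ℝ P x) x := by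
    intro x hx
    exact ((hP.differentiableOn one_ne_zero).differentiableAt (hU.mem_nhds hx)).hasFDerivAt
  have hDPc : ContinuousOn (fderiv ℝ P) U := hP.continuousOn_fderiv_of_isOpen hU le_rfl
  -- bound on the derivative
  obtain ⟨L₀, hL₀⟩ : ∃ C, ∀ x ∈ B, ‖fderiv ℝ P x‖ ≤ C :=
    hBcpt.exists_bound_of_continuousOn (hDPc.mono hBU)
  set L : ℝ := max L₀ 0 with hLdef
  have hL : ∀ x ∈ B, ‖fderiv ℝ P x‖ ≤ L := fun x hx => (hL₀ x hx).trans (le_max_left _ _)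
  have hLnn : 0 ≤ L := le_max_right _ _
  -- P is Lipschitz on B
  have hlip : ∀ a ∈ B, ∀ b ∈ B, ‖P b - P a‖ ≤ L * ‖b - a‖ := fun a ha b hb =>
    Convex.norm_image_sub_le_of_norm_fderiv_le
      (fun z hz => ((hP.differentiableOn one_ne_zero).differentiableAt (hU.mem_nhds (hBU hz))))
      hL hBconv ha hb
  -- determinant of DP vanishes
  have hdet0 : ∀ x ∈ U, (fderiv ℝ P x).det = 0 := by
    intro x hx
    have hq : (fun y => (⟪P y, P y⟫)) =ᶠ[nhds x] fun _ => R ^ 2 := by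
      filter_upwards [hU.mem_nhds hx] with y hy
      rw [real_inner_self_eq_norm_sq, hPnorm y hy]
    have hD : HasFDerivAt (fun y => (⟪P y, P y⟫))
        ((fderivInnerCLM ℝ (P x, P x)).comp
          ((fderiv ℝ P x).prod (fderiv ℝ P x))) x :=
      (hPdiff x hx).inner ℝ (hPdiff x hx)
    have hconst : HasFDerivAt (fun y => (⟪P y, P y⟫))
        (0 : (EuclideanSpace ℝ (Fin n)) →L[ℝ] ℝ) x :=
      (hasFDerivAt_const (R ^ 2) x).congr_of_eventuallyEq hq
    have hzero := hD.unique hconst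
    have horth : ∀ v, ⟪P x, fderiv ℝ P x v⟫ = 0 := by
      intro v
      have h1 := congrFun (congrArg (fun (f : _ →L[ℝ] ℝ) => (f : _ → ℝ)) hzero) v
      simp only [ContinuousLinearMap.coe_comp', Function.comp_apply,
        ContinuousLinearMap.prod_apply, fderivInnerCLM_apply,
        ContinuousLinearMap.zero_apply] at h1
      have h2 : ⟪fderiv ℝ P x v, P x⟫ = ⟪P x, fderiv ℝ P x v⟫ := real_inner_comm _ _
      linarith [h1, h2]
    by_contra hne
    obtain ⟨e, he⟩ := clm_exists_equiv_of_det_ne_zero (fderiv ℝ P x) hne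
    have hsurj : Function.Surjective (fderiv ℝ P x) := by
      rw [← he]; exact e.surjective
    obtain ⟨v, hv⟩ := hsurj (P x)
    have : ⟪P x, P x⟫ = 0 := by
      calc ⟪P x, P x⟫ = ⟪P x, fderiv ℝ P x v⟫ := by rw [hv]
        _ = 0 := horth v
    have hP0 : P x = 0 := inner_self_eq_zero.mp this
    have := hPnorm x hx
    rw [hP0, norm_zero] at this
    exact absurd this.symm (ne_of_gt hR)
  -- the homotopy
  set ft : ℝ → (EuclideanSpace ℝ (Fin n)) → (EuclideanSpace ℝ (Fin n)) := fun t y => y + t • (P y - y) with hft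
  set Dft : ℝ → (EuclideanSpace ℝ (Fin n)) → ((EuclideanSpace ℝ (Fin n)) →L[ℝ] (EuclideanSpace ℝ (Fin n))) := fun t x =>
    ContinuousLinearMap.id ℝ (EuclideanSpace ℝ (Fin n)) + t • (fderiv ℝ P x - ContinuousLinearMap.id ℝ (EuclideanSpace ℝ (Fin n))) with hDft
  have hft' : ∀ (t : ℝ), ∀ x ∈ U, HasFDerivAt (ft t) (Dft t x) x := by
    intro t x hx
    exact (hasFDerivAt_id x).add (((hPdiff x hx).sub (hasFDerivAt_id x)).const_smul t)
  have hftCD : ∀ t : ℝ, ContDiffOn ℝ 1 (ft t) U := fun t =>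
    contDiffOn_id.add ((hP.sub contDiffOn_id).const_smul t)
  set τ : ℝ := 1 / (2 * (L + 2)) with hτ
  have hτpos : 0 < τ := by positivity
  have hτ1 : τ * (L + 1) < 1 := by
    rw [hτ, div_mul_eq_mul_div, one_mul, div_lt_one (by positivity)]
    nlinarith
  have hτle1 : τ ≤ 1 := by
    rw [hτ, div_le_one (by positivity)]; nlinarith
  -- injectivity
  have hinj : ∀ t ∈ Icc (0:ℝ) τ, InjOn (ft t) B := by
    intro t ht x hx y hy hxy
    have h1 : x - y = t • ((P y - y) - (P x - x)) := by
      have h2 : x + t • (P x - x) = y + t • (P y - y) := hxy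
      linear_combination (norm := module) h2
    have h3 : ‖x - y‖ ≤ t * (L + 1) * ‖x - y‖ := by
      calc ‖x - y‖ = ‖t • ((P y - y) - (P x - x))‖ := by rw [h1]
        _ = |t| * ‖(P y - y) - (P x - x)‖ := by
            rw [norm_smul, Real.norm_eq_abs]
        _ = t * ‖(P y - y) - (P x - x)‖ := by rw [abs_of_nonneg ht.1]
        _ ≤ t * (‖P y - P x‖ + ‖y - x‖) := by
            apply mul_le_mul_of_nonneg_left _ ht.1
            calc ‖(P y - y) - (P x - x)‖ = ‖(P y - P x) - (y - x)‖ := by abel_nf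
              _ ≤ ‖P y - P x‖ + ‖y - x‖ := norm_sub_le _ _
        _ ≤ t * (L * ‖y - x‖ + ‖y - x‖) := by
            apply mul_le_mul_of_nonneg_left _ ht.1
            have := hlip x hx y hy
            linarith
        _ = t * (L + 1) * ‖y - x‖ := by ring
        _ = t * (L + 1) * ‖x - y‖ := by rw [norm_sub_rev]
    have htL : t * (L + 1) < 1 := by
      calc t * (L + 1) ≤ τ * (L + 1) := by
            apply mul_le_mul_of_nonneg_right ht.2; linarith
        _ < 1 := hτ1
    have hnorm0 : ‖x - y‖ = 0 := by nlinarith [norm_nonneg (x - y)]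
    have := norm_eq_zero.mp hnorm0
    exact sub_eq_zero.mp this
  -- positivity of the determinant
  have hdetpos : ∀ t ∈ Icc (0:ℝ) τ, ∀ x ∈ B, 0 < (Dft t x).det := by
    intro t ht x hx
    apply det_pos_of_norm_lt_one
    have h1 : ‖fderiv ℝ P x - ContinuousLinearMap.id ℝ (EuclideanSpace ℝ (Fin n))‖ ≤ L + 1 := by
      calc ‖fderiv ℝ P x - ContinuousLinearMap.id ℝ (EuclideanSpace ℝ (Fin n))‖
          ≤ ‖fderiv ℝ P x‖ + ‖ContinuousLinearMap.id ℝ (EuclideanSpace ℝ (Fin n))‖ := norm_sub_le _ _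
        _ ≤ L + 1 := add_le_add (hL x hx) ContinuousLinearMap.norm_id_le
    have h2 : ‖t • (fderiv ℝ P x - ContinuousLinearMap.id ℝ (EuclideanSpace ℝ (Fin n)))‖
        = |t| * ‖fderiv ℝ P x - ContinuousLinearMap.id ℝ (EuclideanSpace ℝ (Fin n))‖ := by
      rw [norm_smul, Real.norm_eq_abs]
    calc ‖t • (fderiv ℝ P x - ContinuousLinearMap.id ℝ (EuclideanSpace ℝ (Fin n)))‖
        = |t| * ‖fderiv ℝ P x - ContinuousLinearMap.id ℝ (EuclideanSpace ℝ (Fin n))‖ := h2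
      _ = t * ‖fderiv ℝ P x - ContinuousLinearMap.id ℝ (EuclideanSpace ℝ (Fin n))‖ := by rw [abs_of_nonneg ht.1]
      _ ≤ t * (L + 1) := by
          apply mul_le_mul_of_nonneg_left h1 ht.1
      _ ≤ τ * (L + 1) := by apply mul_le_mul_of_nonneg_right ht.2; linarith
      _ < 1 := hτ1
  -- surjectivity: ft t '' B = B
  have himage : ∀ t ∈ Icc (0:ℝ) τ, ft t '' B = B := by
    intro t ht
    have hBo : ball (0:(EuclideanSpace ℝ (Fin n))) R ⊆ B := ball_subset_closedBall
    have hsub : ft t '' B ⊆ B := by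
      rintro _ ⟨y, hy, rfl⟩
      have hyB : ‖y‖ ≤ R := mem_closedBall_zero_iff.mp hy
      have hPy : ‖P y‖ = R := hPnorm y (hBU hy)
      have heq : ft t y = (1 - t) • y + t • P y := by
        simp only [hft]
        rw [smul_sub, sub_smul, one_smul]
        abel
      rw [mem_closedBall_zero_iff, heq]
      calc ‖(1 - t) • y + t • P y‖ ≤ ‖(1 - t) • y‖ + ‖t • P y‖ := norm_add_le _ _
        _ = |1 - t| * ‖y‖ + |t| * ‖P y‖ := by rw [norm_smul, norm_smul, Real.norm_eq_abs, Real.norm_eq_abs]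
        _ = (1 - t) * ‖y‖ + t * ‖P y‖ := by
            rw [abs_of_nonneg (by linarith [ht.2, hτle1] : (0:ℝ) ≤ 1 - t), abs_of_nonneg ht.1]
        _ ≤ (1 - t) * R + t * R := by
            apply add_le_add
            · apply mul_le_mul_of_nonneg_left hyB; linarith [ht.2, hτle1]
            · rw [hPy]
        _ = R := by ring
    have hAcpt : IsCompact (ft t '' B) := hBcpt.image_of_continuousOn
      (((hftCD t).continuousOn).mono hBU)
    have hAclosed : IsClosed (ft t '' B) := hAcpt.isClosed
    -- openness of (ft t '' B) ∩ ball
    have hopen : IsOpen (ft t '' B ∩ ball 0 R) := by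
      rw [isOpen_iff_mem_nhds]
      rintro y ⟨⟨x, hxB, rfl⟩, hyo⟩
      have hxo : x ∈ ball (0:(EuclideanSpace ℝ (Fin n))) R := by
        by_contra hxno
        have hxn : ‖x‖ = R := by
          have h1 := mem_closedBall_zero_iff.mp hxB
          have h2 : ¬ ‖x‖ < R := fun hc => hxno (mem_ball_zero_iff.mpr hc)
          linarith [lt_or_eq_of_le h1]
        have : ft t x = x := by
          simp only [hft, hPid x hxn]
          simp
        rw [this] at hyo
        rw [mem_ball_zero_iff, hxn] at hyo
        exact lt_irrefl R hyo
      have hxU : x ∈ U := hBU hxB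
      obtain ⟨e, he⟩ := clm_exists_equiv_of_det_ne_zero (Dft t x)
        (ne_of_gt (hdetpos t ht x hxB))
      have hstrict : HasStrictFDerivAt (ft t) (Dft t x) x := by
        have h1 := ((hftCD t).contDiffAt (hU.mem_nhds hxU)).hasStrictFDerivAt one_ne_zero
        rwa [(hft' t x hxU).fderiv] at h1
      have heCLM : ((e : (EuclideanSpace ℝ (Fin n)) →L[ℝ] (EuclideanSpace ℝ (Fin n)))) = Dft t x := by
        apply ContinuousLinearMap.ext
        intro v
        exact congrFun he v
      have hstrict' : HasStrictFDerivAt (ft t) ((e : (EuclideanSpace ℝ (Fin n)) →L[ℝ] (EuclideanSpace ℝ (Fin n)))) x := by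
        rwa [heCLM]
      have hnhds : Filter.map (ft t) (nhds x) = nhds (ft t x) :=
        hstrict'.map_nhds_eq_of_equiv
      have hA : ft t '' B ∈ nhds (ft t x) := by
        rw [← hnhds, Filter.mem_map]
        have hBn : B ∈ nhds x := by
          apply _root_.mem_nhds_iff.mpr
          exact ⟨ball 0 R, hBo, isOpen_ball, hxo⟩
        filter_upwards [hBn] with z hz
        exact mem_image_of_mem _ hz
      exact Filter.inter_mem hA (isOpen_ball.mem_nhds hyo)
    -- nonempty intersection
    have h0B : (0:(EuclideanSpace ℝ (Fin n))) ∈ B := mem_closedBall_self (le_of_lt hR)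
    have hft0 : ft t 0 ∈ ft t '' B ∩ ball 0 R := by
      refine ⟨mem_image_of_mem _ h0B, ?_⟩
      rw [mem_ball_zero_iff]
      have : ft t 0 = t • P 0 := by simp [hft]
      rw [this, norm_smul, Real.norm_eq_abs, abs_of_nonneg ht.1,
        hPnorm 0 (hBU h0B)]
      calc t * R ≤ τ * R := mul_le_mul_of_nonneg_right ht.2 (le_of_lt hR)
        _ < 1 * R := by
            apply mul_lt_mul_of_pos_right _ hR
            calc τ ≤ τ * (L+1) := le_mul_of_one_le_right (le_of_lt hτpos) (by linarith)
              _ < 1 := hτ1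
        _ = R := one_mul R
    -- connectedness
    have hpre : IsPreconnected (ball (0:(EuclideanSpace ℝ (Fin n))) R) := (convex_ball 0 R).isPreconnected
    have hBoA : ball (0:(EuclideanSpace ℝ (Fin n))) R ⊆ ft t '' B := by
      by_contra hnsub
      rw [Set.not_subset] at hnsub
      obtain ⟨z, hzo, hznA⟩ := hnsub
      have := hpre (ft t '' B ∩ ball 0 R) (ft t '' B)ᶜ hopen
        (hAclosed.isOpen_compl) ?_ ?_ ?_
      · obtain ⟨w, _, ⟨hw1, _⟩, hw3⟩ := this
        exact hw3 hw1
      · intro w hw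
        by_cases hwA : w ∈ ft t '' B
        · exact Or.inl ⟨hwA, hw⟩
        · exact Or.inr hwA
      · exact ⟨ft t 0, hft0.2, hft0⟩
      · exact ⟨z, hzo, hznA⟩
    apply subset_antisymm hsub
    have h1 : closure (ball (0:(EuclideanSpace ℝ (Fin n))) R) ⊆ ft t '' B := hAclosed.closure_subset_iff.mpr hBoA
    rwa [closure_ball 0 (ne_of_gt hR)] at h1
  -- change of variables: the integral of det over B is constant
  have hIcont : ∀ t : ℝ, ContinuousOn (fun x => (Dft t x).det) B := by
    intro t
    apply clm_det_continuous.comp_continuousOn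
    exact continuousOn_const.add (((hDPc.mono hBU).sub continuousOn_const).const_smul t)
  have hIval : ∀ t ∈ Icc (0:ℝ) τ, (∫ x in B, (Dft t x).det) = (volume B).toReal := by
    intro t ht
    have hcov := integral_image_eq_integral_abs_det_fderiv_smul volume
      (measurableSet_closedBall : MeasurableSet B)
      (fun x hx => (hft' t x (hBU hx)).hasFDerivWithinAt) (hinj t ht)
      (fun _ => (1:ℝ))
    rw [himage t ht] at hcov
    rw [setIntegral_const] at hcov
    simp only [smul_eq_mul, mul_one] at hcov
    have : ∫ x in B, |(Dft t x).det| = ∫ x in B, (Dft t x).det := by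
      apply setIntegral_congr_fun (measurableSet_closedBall : MeasurableSet B)
      intro x hx
      exact abs_of_pos (hdetpos t ht x hx)
    rw [this] at hcov
    exact hcov.symm
  -- Lagrange nodes and weights
  set v : Fin (n + 1) → ℝ := fun j => τ * ((j : ℕ) + 1) / (n + 1) with hv
  have hvmem : ∀ j, v j ∈ Icc (0:ℝ) τ := by
    intro j
    constructor
    · positivity
    · rw [hv]
      rw [div_le_iff₀ (by positivity : (0:ℝ) < (n:ℝ) + 1)]
      have hj : ((j : ℕ) : ℝ) + 1 ≤ (n : ℝ) + 1 := by
        have := j.isLt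
        have : ((j : ℕ) : ℝ) ≤ (n : ℝ) := by exact_mod_cast Nat.lt_succ_iff.mp this
        linarith
      nlinarith
  have hvinj : Function.Injective v := by
    intro j k hjk
    rw [hv] at hjk
    simp only at hjk
    have hn1 : (0:ℝ) < (n:ℝ) + 1 := by positivity
    have h2 : τ * (((j:ℕ):ℝ) + 1) = τ * (((k:ℕ):ℝ) + 1) := by
      have h3 := congrArg (fun z : ℝ => z * ((n:ℝ) + 1)) hjk
      rwa [div_mul_cancel₀ _ (ne_of_gt hn1), div_mul_cancel₀ _ (ne_of_gt hn1)] at h3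
    have h4 := mul_left_cancel₀ (ne_of_gt hτpos) h2
    have h1 : ((j : ℕ) : ℝ) = ((k : ℕ) : ℝ) := by linarith
    exact Fin.ext (by exact_mod_cast h1)
  obtain ⟨w, hw⟩ := lagrange_weights n v hvinj
  have hwsum : ∑ j, w j = 1 := by
    have := hw (C 1) (by simp)
    simp only [eval_C, mul_one] at this
    exact this.symm
  -- pointwise identity
  have hpoint : ∀ x ∈ B, (0:ℝ) = ∑ j, w j * (Dft (v j) x).det := by
    intro x hx
    set b := (EuclideanSpace.basisFun (Fin n) ℝ).toBasis with hb
    set Nm : Matrix (Fin n) (Fin n) ℝ := LinearMap.toMatrix b b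
      (((fderiv ℝ P x - ContinuousLinearMap.id ℝ (EuclideanSpace ℝ (Fin n))) : (EuclideanSpace ℝ (Fin n)) →L[ℝ] (EuclideanSpace ℝ (Fin n))) : (EuclideanSpace ℝ (Fin n)) →ₗ[ℝ] (EuclideanSpace ℝ (Fin n))) with hNm
    have hkey : ∀ t : ℝ, (Dft t x).det = ((1 : Matrix (Fin n) (Fin n) ℝ) + t • Nm).det := by
      intro t
      rw [ContinuousLinearMap.det, ← LinearMap.det_toMatrix b]
      congr 1
      have h1 : ((Dft t x : (EuclideanSpace ℝ (Fin n)) →L[ℝ] (EuclideanSpace ℝ (Fin n))) : (EuclideanSpace ℝ (Fin n)) →ₗ[ℝ] (EuclideanSpace ℝ (Fin n)))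
          = LinearMap.id + t • (((fderiv ℝ P x - ContinuousLinearMap.id ℝ (EuclideanSpace ℝ (Fin n))) : (EuclideanSpace ℝ (Fin n)) →L[ℝ] (EuclideanSpace ℝ (Fin n))) : (EuclideanSpace ℝ (Fin n)) →ₗ[ℝ] (EuclideanSpace ℝ (Fin n))) := by
        rfl
      rw [h1, map_add, LinearEquiv.map_smul, LinearMap.toMatrix_id]
    obtain ⟨p, hpdeg, hpeval⟩ := det_poly_exists Nm
    have h2 : ∀ t : ℝ, p.eval t = (Dft t x).det := fun t => by rw [hpeval t, ← hkey t]
    have h3 : (fderiv ℝ P x).det = p.eval 1 := by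
      rw [h2 1]
      congr 1
      simp only [hDft, one_smul]
      abel
    have h4 := hw p hpdeg
    rw [← h3] at h4
    rw [hdet0 x (hBU hx)] at h4
    rw [h4]
    congr 1
    ext j
    rw [h2 (v j)]
  -- integrate the pointwise identity
  have hInt : ∀ t : ℝ, IntegrableOn (fun x => (Dft t x).det) B volume :=
    fun t => (hIcont t).integrableOn_compact hBcpt
  have hfinal : (0:ℝ) = (∑ j, w j) * (volume B).toReal := by
    have h5 : (0:ℝ) = ∫ x in B, (∑ j, w j * (Dft (v j) x).det) := by
      rw [← setIntegral_congr_fun (measurableSet_closedBall : MeasurableSet B)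
        (fun x hx => hpoint x hx)]
      simp
    rw [h5]
    rw [integral_finset_sum]
    · rw [Finset.sum_mul]
      apply Finset.sum_congr rfl
      intro j _
      rw [MeasureTheory.integral_const_mul]
      rw [hIval (v j) (hvmem j)]
    · intro j _
      exact (hInt (v j)).const_mul (w j)
  rw [hwsum, one_mul] at hfinal
  have hpos : 0 < (volume B).toReal := by
    apply ENNReal.toReal_pos
    · exact ne_of_gt (measure_closedBall_pos volume 0 hR)
    · exact ne_of_lt measure_closedBall_lt_top
  rw [← hfinal] at hpos
  exact lt_irrefl 0 hpos


set_option maxHeartbeats 1000000 in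
theorem fixed_point_C1 {n : ℕ} {R ρ : ℝ} (hR : 0 < R) (hρ0 : 0 ≤ ρ) (hρR : ρ < R)
    (S : EuclideanSpace ℝ (Fin n) → EuclideanSpace ℝ (Fin n))
    (hS : ContDiff ℝ 1 S)
    (hbound : ∀ y ∈ closedBall (0 : EuclideanSpace ℝ (Fin n)) R, ‖S y‖ ≤ ρ) :
    ∃ y ∈ closedBall (0 : EuclideanSpace ℝ (Fin n)) R, S y = y := by
  classical
  by_contra hcon
  push_neg at hcon
  set ρ'' : ℝ := (ρ + R) / 2 with hρ''
  have hρ''R : ρ'' < R := by rw [hρ'']; linarith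
  have hρ''0 : 0 ≤ ρ'' := by rw [hρ'']; linarith
  set U : Set (EuclideanSpace ℝ (Fin n)) :=
    {y | S y ≠ y} ∩ {y | ‖S y‖ < ρ''} with hUdef
  have hU : IsOpen U := by
    apply IsOpen.inter
    · have : {y : EuclideanSpace ℝ (Fin n) | S y ≠ y}
          = (fun y => S y - y) ⁻¹' ({0}ᶜ) := by
        ext y; simp [sub_eq_zero]
      rw [this]
      exact (isOpen_compl_singleton).preimage (hS.continuous.sub continuous_id)
    · exact isOpen_lt (hS.continuous.norm) continuous_const
  have hBU : closedBall (0 : EuclideanSpace ℝ (Fin n)) R ⊆ U := by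
    intro y hy
    exact ⟨hcon y hy, lt_of_le_of_lt (hbound y hy) (by rw [hρ'']; linarith)⟩
  -- data on U
  have hdne : ∀ y ∈ U, y - S y ≠ 0 := by
    intro y hy hzero
    rw [sub_eq_zero] at hzero
    exact hy.1 hzero.symm
  have hSlt : ∀ y ∈ U, ‖S y‖ < R := fun y hy => lt_trans hy.2 hρ''R
  set d : EuclideanSpace ℝ (Fin n) → EuclideanSpace ℝ (Fin n) := fun y => y - S y with hd
  set nd : EuclideanSpace ℝ (Fin n) → ℝ := fun y => ‖d y‖ with hnd
  set u : EuclideanSpace ℝ (Fin n) → EuclideanSpace ℝ (Fin n) :=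
    fun y => (nd y)⁻¹ • d y with hu
  set bf : EuclideanSpace ℝ (Fin n) → ℝ := fun y => ⟪S y, u y⟫ with hbf
  set tf : EuclideanSpace ℝ (Fin n) → ℝ :=
    fun y => -bf y + Real.sqrt (bf y ^ 2 + R ^ 2 - ‖S y‖ ^ 2) with htf
  set P : EuclideanSpace ℝ (Fin n) → EuclideanSpace ℝ (Fin n) :=
    fun y => S y + tf y • u y with hPdef
  have hndpos : ∀ y ∈ U, 0 < nd y := fun y hy => norm_pos_iff.mpr (hdne y hy)
  have hDpos : ∀ y ∈ U, 0 < bf y ^ 2 + R ^ 2 - ‖S y‖ ^ 2 := by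
    intro y hy
    have h1 : ‖S y‖ ^ 2 < R ^ 2 := by
      apply sq_lt_sq' _ (hSlt y hy)
      linarith [norm_nonneg (S y)]
    nlinarith [sq_nonneg (bf y)]
  have hunorm : ∀ y ∈ U, ‖u y‖ = 1 := by
    intro y hy
    rw [hu]
    simp only
    rw [norm_smul, Real.norm_eq_abs, abs_of_nonneg (inv_nonneg.mpr (norm_nonneg _))]
    rw [inv_mul_cancel₀ (ne_of_gt (hndpos y hy))]
  -- smoothness
  have hPsmooth : ContDiffOn ℝ 1 P U := by
    intro y hy
    apply ContDiffAt.contDiffWithinAt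
    have hdA : ContDiffAt ℝ 1 d y := (contDiff_id.sub hS).contDiffAt
    have hndA : ContDiffAt ℝ 1 nd y := hdA.norm ℝ (hdne y hy)
    have huA : ContDiffAt ℝ 1 u y := (hndA.inv (ne_of_gt (hndpos y hy))).smul hdA
    have hbA : ContDiffAt ℝ 1 bf y := (hS.contDiffAt).inner ℝ huA
    have hDA : ContDiffAt ℝ 1 (fun z => bf z ^ 2 + R ^ 2 - ‖S z‖ ^ 2) y := by
      have hn2 : ContDiffAt ℝ 1 (fun z => ‖S z‖ ^ 2) y := by
        have : (fun z => ‖S z‖ ^ 2) = fun z => ⟪S z, S z⟫ := by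
          ext z; rw [real_inner_self_eq_norm_sq]
        rw [this]
        exact (hS.contDiffAt).inner ℝ (hS.contDiffAt)
      exact ((hbA.pow 2).add contDiffAt_const).sub hn2
    have hsA : ContDiffAt ℝ 1 (fun z => Real.sqrt (bf z ^ 2 + R ^ 2 - ‖S z‖ ^ 2)) y :=
      (Real.contDiffAt_sqrt (ne_of_gt (hDpos y hy))).comp y hDA
    have htA : ContDiffAt ℝ 1 tf y := (hbA.neg).add hsA
    exact (hS.contDiffAt).add (htA.smul huA)
  -- P maps into the sphere
  have hPnorm : ∀ y ∈ U, ‖P y‖ = R := by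
    intro y hy
    have hD := hDpos y hy
    have hsq : ‖P y‖ ^ 2 = R ^ 2 := by
      rw [hPdef]
      simp only
      rw [@norm_add_sq_real]
      rw [real_inner_smul_right]
      rw [norm_smul, Real.norm_eq_abs]
      rw [hunorm y hy]
      have hsqrt := Real.sq_sqrt (le_of_lt hD)
      have habs : |tf y| ^ 2 = tf y ^ 2 := sq_abs _
      rw [mul_one]
      rw [habs]
      have : ⟪S y, u y⟫ = bf y := rfl
      rw [this]
      rw [htf]
      simp only
      nlinarith [hsqrt]
    have hPnn : 0 ≤ ‖P y‖ := norm_nonneg _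
    nlinarith [hPnn, hR]
  -- P is the identity on the sphere
  have hPid : ∀ y : EuclideanSpace ℝ (Fin n), ‖y‖ = R → P y = y := by
    intro y hyR
    have hyB : y ∈ closedBall (0 : EuclideanSpace ℝ (Fin n)) R :=
      mem_closedBall_zero_iff.mpr (le_of_eq hyR)
    have hyU : y ∈ U := hBU hyB
    have hD := hDpos y hyU
    have hndp := hndpos y hyU
    -- y = S y + nd y • u y
    have hrepr : y = S y + nd y • u y := by
      rw [hu]
      simp only
      rw [smul_smul, mul_inv_cancel₀ (ne_of_gt hndp), one_smul]
      have hdy : d y = y - S y := rfl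
      rw [hdy]
      abel
    -- nd y satisfies the quadratic
    have hquad : nd y ^ 2 + 2 * bf y * nd y + ‖S y‖ ^ 2 = R ^ 2 := by
      have h1 : ‖y‖ ^ 2 = R ^ 2 := by rw [hyR]
      calc nd y ^ 2 + 2 * bf y * nd y + ‖S y‖ ^ 2
          = ‖S y + nd y • u y‖ ^ 2 := by
            rw [@norm_add_sq_real, real_inner_smul_right, norm_smul, Real.norm_eq_abs,
              hunorm y hyU, abs_of_nonneg (le_of_lt hndp), mul_one]
            have : ⟪S y, u y⟫ = bf y := rfl
            rw [this]; ring
        _ = ‖y‖ ^ 2 := by rw [← hrepr]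
        _ = R ^ 2 := h1
    have hndb : (nd y + bf y) ^ 2 = bf y ^ 2 + R ^ 2 - ‖S y‖ ^ 2 := by nlinarith
    have hsqrtgt : |bf y| < Real.sqrt (bf y ^ 2 + R ^ 2 - ‖S y‖ ^ 2) := by
      have h2 : ‖S y‖ ^ 2 < R ^ 2 := by
        apply sq_lt_sq' _ (hSlt y hyU)
        linarith [norm_nonneg (S y)]
      have h3 : bf y ^ 2 < bf y ^ 2 + R ^ 2 - ‖S y‖ ^ 2 := by linarith
      calc |bf y| = Real.sqrt (bf y ^ 2) := by rw [Real.sqrt_sq_eq_abs]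
        _ < Real.sqrt (bf y ^ 2 + R ^ 2 - ‖S y‖ ^ 2) :=
            Real.sqrt_lt_sqrt (sq_nonneg _) h3
    have hpos : 0 ≤ nd y + bf y := by
      by_contra hneg
      push_neg at hneg
      have h4 : nd y + bf y = - Real.sqrt (bf y ^ 2 + R ^ 2 - ‖S y‖ ^ 2) := by
        -- (nd y + bf y)^2 = D and nd y + bf y < 0
        have h6 : Real.sqrt ((nd y + bf y) ^ 2) = |nd y + bf y| := Real.sqrt_sq_eq_abs _
        rw [hndb] at h6
        rw [abs_of_neg hneg] at h6
        linarith [h6]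
      have h7 : nd y < 0 := by
        have := neg_lt_of_abs_lt hsqrtgt
        linarith [h4, this]
      linarith [hndp]
    have hsqrteq : Real.sqrt (bf y ^ 2 + R ^ 2 - ‖S y‖ ^ 2) = nd y + bf y := by
      rw [← hndb, Real.sqrt_sq hpos]
    have htval : tf y = nd y := by
      rw [htf]
      simp only
      rw [hsqrteq]; ring
    rw [hPdef]
    simp only
    rw [htval, ← hrepr]
  exact no_retraction hR U hU hBU P hPsmooth hPnorm hPid

set_option maxHeartbeats 1000000 in
theorem fixed_point_cont {n : ℕ} {R ρ : ℝ} (hR : 0 < R) (hρR : ρ < R)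
    (S : EuclideanSpace ℝ (Fin n) → EuclideanSpace ℝ (Fin n))
    (hS : Continuous S) (hbound : ∀ y, ‖S y‖ ≤ ρ) :
    ∃ y ∈ closedBall (0 : EuclideanSpace ℝ (Fin n)) R, S y = y := by
  classical
  have hρ0 : 0 ≤ ρ := le_trans (norm_nonneg (S 0)) (hbound 0)
  set B : Set (EuclideanSpace ℝ (Fin n)) := closedBall 0 R with hB
  have hBcpt : IsCompact B := isCompact_closedBall 0 R
  have hBne : B.Nonempty := ⟨0, mem_closedBall_self (le_of_lt hR)⟩
  obtain ⟨y₀, hy₀B, hy₀min⟩ := hBcpt.exists_isMinOn hBne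
    ((hS.sub continuous_id).norm.continuousOn :
      ContinuousOn (fun y => ‖S y - y‖) B)
  refine ⟨y₀, hy₀B, ?_⟩
  by_contra hne
  have hc : 0 < ‖S y₀ - y₀‖ := by
    rw [norm_pos_iff, sub_ne_zero]
    exact fun h => hne h
  set c := ‖S y₀ - y₀‖ with hcdef
  set δ : ℝ := min (c / 2) ((R - ρ) / 4) with hδ
  have hδpos : 0 < δ := by
    apply lt_min
    · linarith
    · linarith
  -- uniform continuity on a big ball
  set K : Set (EuclideanSpace ℝ (Fin n)) := closedBall 0 (R + 1) with hK
  have hKcpt : IsCompact K := isCompact_closedBall 0 (R + 1)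
  have hucont : UniformContinuousOn S K := hKcpt.uniformContinuousOn_of_continuous
    hS.continuousOn
  rw [Metric.uniformContinuousOn_iff] at hucont
  obtain ⟨η, hηpos, hη⟩ := hucont δ hδpos
  set η' : ℝ := min η 1 with hη'
  have hη'pos : 0 < η' := lt_min hηpos one_pos
  -- the bump function
  set φ : ContDiffBump (0 : EuclideanSpace ℝ (Fin n)) :=
    ⟨η' / 2, η', by positivity, by linarith⟩ with hφ
  set S' := convolution (φ.normed volume) S (ContinuousLinearMap.lsmul ℝ ℝ) volume with hS'
  have hS'smooth : ContDiff ℝ 1 S' := by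
    have h1 : ContDiff ℝ (⊤ : ℕ∞) S' :=
      HasCompactSupport.contDiff_convolution_left _ φ.hasCompactSupport_normed
        φ.contDiff_normed (hS.locallyIntegrable)
    exact h1.of_le (by simp)
  have happrox : ∀ y ∈ B, dist (S' y) (S y) ≤ δ := by
    intro y hy
    apply ContDiffBump.dist_normed_convolution_le hS.aestronglyMeasurable
    intro x hx
    have hxK : x ∈ K := by
      rw [mem_closedBall_zero_iff]
      have h1 : dist x y < η' := by
        have := mem_ball.mp hx
        simpa [dist_comm] using this
      have h2 : ‖y‖ ≤ R := mem_closedBall_zero_iff.mp hy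
      calc ‖x‖ ≤ ‖y‖ + ‖x - y‖ := norm_le_insert' x y
        _ ≤ R + 1 := by
            apply add_le_add h2
            rw [← dist_eq_norm]
            have : η' ≤ 1 := min_le_right _ _
            linarith
    have hyK : y ∈ K := by
      apply closedBall_subset_closedBall (by linarith : R ≤ R + 1) hy
    apply le_of_lt
    apply hη x hxK y hyK
    have := mem_ball.mp hx
    calc dist x y < φ.rOut := by simpa [dist_comm] using this
      _ = η' := rfl
      _ ≤ η := min_le_left _ _
  have hbound' : ∀ y ∈ B, ‖S' y‖ ≤ ρ + δ := by
    intro y hy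
    calc ‖S' y‖ ≤ ‖S y‖ + ‖S' y - S y‖ := norm_le_insert' (S' y) (S y)
      _ ≤ ρ + δ := by
          apply add_le_add
          · exact hbound y
          · rw [← dist_eq_norm]; exact happrox y hy
  have hρδR : ρ + δ < R := by
    have : δ ≤ (R - ρ) / 4 := min_le_right _ _
    linarith
  obtain ⟨y₁, hy₁B, hy₁fix⟩ := fixed_point_C1 hR (by linarith : (0:ℝ) ≤ ρ + δ) hρδR S'
    hS'smooth hbound'
  have hfinal : ‖S y₁ - y₁‖ ≤ δ := by
    calc ‖S y₁ - y₁‖ = ‖S y₁ - S' y₁‖ := by rw [hy₁fix]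
      _ = dist (S' y₁) (S y₁) := by rw [dist_eq_norm, norm_sub_rev]
      _ ≤ δ := happrox y₁ hy₁B
  have hmin : ‖S y₀ - y₀‖ ≤ ‖S y₁ - y₁‖ := hy₀min hy₁B
  have : δ < c := by
    have h1 : δ ≤ c / 2 := min_le_left _ _
    linarith
  linarith [hfinal, hmin]


set_option maxHeartbeats 1000000 in
/-- Persistence of a nondegenerate critical point under `C¹`-small perturbations
(Lemma 6 of the paper): if `x₀` is a nondegenerate critical point of a `C²` function
`ℓ₂ : ℝⁿ → ℝ`, then for every sufficiently small `r > 0` there is `ε > 0` such that any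
`C¹` function whose derivative is `ε`-close to that of `ℓ₂` on the closed ball of radius
`r` has a critical point in the open ball of radius `r` around `x₀`. -/
theorem stmt7 {n : ℕ} (ℓ₂ : EuclideanSpace ℝ (Fin n) → ℝ)
    (hℓ₂ : ContDiff ℝ 2 ℓ₂)
    (x₀ : EuclideanSpace ℝ (Fin n))
    (hcrit : fderiv ℝ ℓ₂ x₀ = 0)
    (hnd : Function.Bijective ⇑(fderiv ℝ (fderiv ℝ ℓ₂) x₀)) :
    ∃ r₀ : ℝ, 0 < r₀ ∧ ∀ r : ℝ, 0 < r → r ≤ r₀ →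
      ∃ ε : ℝ, 0 < ε ∧ ∀ ℓ : EuclideanSpace ℝ (Fin n) → ℝ,
        ContDiff ℝ 1 ℓ →
        (∀ x ∈ Metric.closedBall x₀ r, ‖fderiv ℝ ℓ x - fderiv ℝ ℓ₂ x‖ < ε) →
        ∃ x ∈ Metric.ball x₀ r, fderiv ℝ ℓ x = 0 := by
  classical
  -- the linear isomorphism between the dual and the space
  set td := InnerProductSpace.toDual ℝ (EuclideanSpace ℝ (Fin n)) with htd
  set Jle : ((EuclideanSpace ℝ (Fin n)) →L[ℝ] ℝ) ≃ₗ[ℝ] EuclideanSpace ℝ (Fin n) :=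
    { toFun := fun w => td.symm w
      invFun := fun x => td x
      map_add' := fun w₁ w₂ => by simp
      map_smul' := fun c w => by
        simp only [RingHom.id_apply]
        have := td.symm.map_smulₛₗ c w
        simpa [starRingEnd_apply] using this
      left_inv := fun w => by simp
      right_inv := fun x => by simp } with hJle
  set J := Jle.toContinuousLinearEquiv with hJ
  have hJapp : ∀ w, J w = td.symm w := fun w => rfl
  have hJnorm : ∀ w, ‖J w‖ = ‖w‖ := fun w => by rw [hJapp]; exact td.symm.norm_map w
  -- the gradient-like map F
  set F : EuclideanSpace ℝ (Fin n) → EuclideanSpace ℝ (Fin n) :=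
    fun x => J (fderiv ℝ ℓ₂ x) with hF
  have hDl2 : ContDiff ℝ 1 (fderiv ℝ ℓ₂) := hℓ₂.fderiv_right (by norm_num)
  have hFsmooth : ContDiff ℝ 1 F := by
    have h1 : ContDiff ℝ 1 (⇑(J : ((EuclideanSpace ℝ (Fin n)) →L[ℝ] ℝ) →L[ℝ] EuclideanSpace ℝ (Fin n))) :=
      (J : ((EuclideanSpace ℝ (Fin n)) →L[ℝ] ℝ) →L[ℝ] EuclideanSpace ℝ (Fin n)).contDiff
    have h2 := h1.comp hDl2
    exact h2
  have hFx₀ : F x₀ = 0 := by rw [hF]; simp only [hcrit]; exact map_zero J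
  -- derivative of F at x₀ and its bijectivity
  have hFderiv : fderiv ℝ F x₀
      = (J : ((EuclideanSpace ℝ (Fin n)) →L[ℝ] ℝ) →L[ℝ] EuclideanSpace ℝ (Fin n)).comp
        (fderiv ℝ (fderiv ℝ ℓ₂) x₀) := by
    have := J.comp_fderiv (f := fderiv ℝ ℓ₂) (x := x₀)
    exact this
  have hAbij : Function.Bijective ⇑(fderiv ℝ F x₀) := by
    rw [hFderiv]
    have : ⇑((J : ((EuclideanSpace ℝ (Fin n)) →L[ℝ] ℝ) →L[ℝ] EuclideanSpace ℝ (Fin n)).comp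
        (fderiv ℝ (fderiv ℝ ℓ₂) x₀)) = ⇑J ∘ ⇑(fderiv ℝ (fderiv ℝ ℓ₂) x₀) := rfl
    rw [this]
    exact J.bijective.comp hnd
  -- build the continuous linear equivalence
  set A := fderiv ℝ F x₀ with hA
  set eA := (LinearEquiv.ofBijective (A : (EuclideanSpace ℝ (Fin n)) →ₗ[ℝ] EuclideanSpace ℝ (Fin n))
    hAbij).toContinuousLinearEquiv with heA
  have heAcoe : (eA : (EuclideanSpace ℝ (Fin n)) →L[ℝ] EuclideanSpace ℝ (Fin n)) = A := by
    apply ContinuousLinearMap.ext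
    intro v
    rfl
  have hFstrict : HasStrictFDerivAt F ((eA : (EuclideanSpace ℝ (Fin n)) ≃L[ℝ] EuclideanSpace ℝ (Fin n)) :
      (EuclideanSpace ℝ (Fin n)) →L[ℝ] EuclideanSpace ℝ (Fin n)) x₀ := by
    rw [heAcoe, hA]
    exact (hFsmooth.contDiffAt).hasStrictFDerivAt one_ne_zero
  -- the inverse function theorem
  set ph := hFstrict.toOpenPartialHomeomorph F with hph
  have hphcoe : ⇑ph = F := hFstrict.toOpenPartialHomeomorph_coe
  have hsource : x₀ ∈ ph.source := hFstrict.mem_toOpenPartialHomeomorph_source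
  have htarget0 : (0 : EuclideanSpace ℝ (Fin n)) ∈ ph.target := by
    have := ph.map_source hsource
    rwa [hphcoe, hFx₀] at this
  set ψ := ph.symm with hψ
  have hψcont : ContinuousOn ψ ph.target := ph.continuousOn_symm
  have hψ0 : ψ 0 = x₀ := by
    have := ph.left_inv hsource
    rwa [hphcoe, hFx₀] at this
  have hrightinv : ∀ y ∈ ph.target, F (ψ y) = y := by
    intro y hy
    have := ph.right_inv hy
    rwa [hphcoe] at this
  -- main construction
  refine ⟨1, one_pos, ?_⟩
  intro r hr _
  have hψat : ContinuousAt ψ 0 := hψcont.continuousAt (ph.open_target.mem_nhds htarget0)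
  have hV : ph.target ∩ ψ ⁻¹' (ball x₀ r) ∈ nhds (0 : EuclideanSpace ℝ (Fin n)) := by
    apply Filter.inter_mem (ph.open_target.mem_nhds htarget0)
    apply hψat.preimage_mem_nhds
    rw [hψ0]
    exact isOpen_ball.mem_nhds (mem_ball_self hr)
  obtain ⟨ε, hεpos, hεsub⟩ := Metric.nhds_basis_closedBall.mem_iff.mp hV
  refine ⟨ε, hεpos, ?_⟩
  intro ℓ hℓ hclose
  -- the perturbation field
  set g : EuclideanSpace ℝ (Fin n) → EuclideanSpace ℝ (Fin n) :=
    fun x => J (fderiv ℝ ℓ x - fderiv ℝ ℓ₂ x) with hg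
  have hgcont : Continuous g := by
    apply (J : ((EuclideanSpace ℝ (Fin n)) →L[ℝ] ℝ) →L[ℝ] EuclideanSpace ℝ (Fin n)).continuous.comp
    exact (hℓ.continuous_fderiv one_ne_zero).sub (hDl2.continuous)
  have hgnorm : ∀ x, ‖g x‖ = ‖fderiv ℝ ℓ x - fderiv ℝ ℓ₂ x‖ := fun x => hJnorm _
  -- the retraction onto the closed ε-ball
  set ret : EuclideanSpace ℝ (Fin n) → EuclideanSpace ℝ (Fin n) :=
    fun y => (ε / max ε ‖y‖) • y with hret
  have hmaxpos : ∀ y : EuclideanSpace ℝ (Fin n), 0 < max ε ‖y‖ :=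
    fun y => lt_of_lt_of_le hεpos (le_max_left _ _)
  have hretcont : Continuous ret := by
    refine (?_ : Continuous fun y : EuclideanSpace ℝ (Fin n) => ε / max ε ‖y‖).smul continuous_id
    apply Continuous.div continuous_const (continuous_const.max continuous_norm)
    intro y
    exact ne_of_gt (hmaxpos y)
  have hretmem : ∀ y, ret y ∈ closedBall (0 : EuclideanSpace ℝ (Fin n)) ε := by
    intro y
    rw [mem_closedBall_zero_iff, hret]
    simp only
    rw [norm_smul, Real.norm_eq_abs, abs_of_nonneg (div_nonneg (le_of_lt hεpos) (le_of_lt (hmaxpos y)))]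
    rw [div_mul_eq_mul_div, div_le_iff₀ (hmaxpos y)]
    have h1 : ‖y‖ ≤ max ε ‖y‖ := le_max_right _ _
    nlinarith [hεpos]
  have hretid : ∀ y ∈ closedBall (0 : EuclideanSpace ℝ (Fin n)) ε, ret y = y := by
    intro y hy
    rw [hret]
    simp only
    rw [mem_closedBall_zero_iff] at hy
    rw [max_eq_left hy, div_self (ne_of_gt hεpos), one_smul]
  -- compactness and the uniform bound
  have hballsub : closedBall (0 : EuclideanSpace ℝ (Fin n)) ε ⊆ ph.target ∩ ψ ⁻¹' (ball x₀ r) :=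
    hεsub
  set K := ψ '' (closedBall (0 : EuclideanSpace ℝ (Fin n)) ε) with hK
  have hKcpt : IsCompact K := (isCompact_closedBall _ _).image_of_continuousOn
    (hψcont.mono (fun y hy => (hballsub hy).1))
  have hKne : K.Nonempty := ⟨ψ 0, mem_image_of_mem _ (mem_closedBall_self (le_of_lt hεpos))⟩
  have hKball : K ⊆ ball x₀ r := by
    rintro _ ⟨y, hy, rfl⟩
    exact (hballsub hy).2
  have hnormcont : ContinuousOn (fun x => ‖fderiv ℝ ℓ x - fderiv ℝ ℓ₂ x‖) K :=
    (((hℓ.continuous_fderiv one_ne_zero).sub hDl2.continuous).norm).continuousOn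
  obtain ⟨xm, hxmK, hxmmax⟩ := hKcpt.exists_isMaxOn hKne hnormcont
  set ρ : ℝ := ‖fderiv ℝ ℓ xm - fderiv ℝ ℓ₂ xm‖ with hρ
  have hρε : ρ < ε := hclose xm (ball_subset_closedBall (hKball hxmK))
  -- the fixed point map
  set S : EuclideanSpace ℝ (Fin n) → EuclideanSpace ℝ (Fin n) :=
    fun y => -(g (ψ (ret y))) with hS
  have hScont : Continuous S := by
    apply Continuous.neg
    apply hgcont.comp
    apply hψcont.comp_continuous hretcont
    intro y
    exact (hballsub (hretmem y)).1
  have hSbound : ∀ y, ‖S y‖ ≤ ρ := by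
    intro y
    rw [hS]
    simp only [norm_neg]
    rw [hgnorm]
    exact hxmmax (mem_image_of_mem _ (hretmem y))
  obtain ⟨y₁, hy₁B, hy₁fix⟩ := fixed_point_cont hεpos hρε S hScont hSbound
  -- extract the critical point
  have hry : ret y₁ = y₁ := hretid y₁ hy₁B
  set x := ψ y₁ with hx
  have hy₁V := hballsub hy₁B
  refine ⟨x, hy₁V.2, ?_⟩
  have hFx : F x = y₁ := hrightinv y₁ hy₁V.1
  have heq : -(g x) = y₁ := by
    have := hy₁fix
    rw [hS] at this
    simp only at this
    rwa [hry] at this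
  have hJeq : J (fderiv ℝ ℓ₂ x) = J (-(fderiv ℝ ℓ x - fderiv ℝ ℓ₂ x)) := by
    rw [map_neg]
    calc J (fderiv ℝ ℓ₂ x) = F x := rfl
      _ = y₁ := hFx
      _ = -(g x) := heq.symm
      _ = -(J (fderiv ℝ ℓ x - fderiv ℝ ℓ₂ x)) := rfl
  have harg := J.injective hJeq
  have h3 : fderiv ℝ ℓ₂ x + (fderiv ℝ ℓ x - fderiv ℝ ℓ₂ x) = 0 := by
    nth_rewrite 1 [harg]; abel
  calc fderiv ℝ ℓ x = fderiv ℝ ℓ₂ x + (fderiv ℝ ℓ x - fderiv ℝ ℓ₂ x) := by abel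
    _ = 0 := h3
end

section
/- Let ℓ₂ : ℝⁿ → ℝ be a C² function and let x₀ ∈ ℝⁿ be a nondegenerate critical point of ℓ₂ (Dℓ₂(x₀) = 0 and D²ℓ₂(x₀) invertible). Then for every sufficiently small r > 0 there exists ε > 0 such that every C² function ℓ : ℝⁿ → ℝ satisfying sup_{x ∈ closedBall(x₀, r)} ( ‖Dℓ(x) − Dℓ₂(x)‖ + ‖D²ℓ(x) − D²ℓ₂(x)‖ ) < ε has exactly one critical point in the open ball of radius r around x₀, and this critical point is nondegenerate. -/
open Metric Set
open scoped NNReal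

set_option maxHeartbeats 1600000

/-- `C²` version of the persistence of a nondegenerate critical point: if `x₀` is a
nondegenerate critical point of a `C²` function `ℓ₂ : ℝⁿ → ℝ`, then for every
sufficiently small `r > 0` there is `ε > 0` such that any `C²` function that is
`ε`-close to `ℓ₂` in the `C²` sense on the closed ball of radius `r` has exactly one
critical point in the open ball of radius `r` around `x₀`, and this critical point is
nondegenerate. -/
theorem stmt8 {n : ℕ} (ℓ₂ : EuclideanSpace ℝ (Fin n) → ℝ)
    (hℓ₂ : ContDiff ℝ 2 ℓ₂)
    (x₀ : EuclideanSpace ℝ (Fin n))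
    (hcrit : fderiv ℝ ℓ₂ x₀ = 0)
    (hnd : Function.Bijective ⇑(fderiv ℝ (fderiv ℝ ℓ₂) x₀)) :
    ∃ r₀ : ℝ, 0 < r₀ ∧ ∀ r : ℝ, 0 < r → r ≤ r₀ →
      ∃ ε : ℝ, 0 < ε ∧ ∀ ℓ : EuclideanSpace ℝ (Fin n) → ℝ,
        ContDiff ℝ 2 ℓ →
        (∀ x ∈ Metric.closedBall x₀ r,
          ‖fderiv ℝ ℓ x - fderiv ℝ ℓ₂ x‖
            + ‖fderiv ℝ (fderiv ℝ ℓ) x - fderiv ℝ (fderiv ℝ ℓ₂) x‖ < ε) →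
        ∃ x : EuclideanSpace ℝ (Fin n),
          (x ∈ Metric.ball x₀ r ∧ fderiv ℝ ℓ x = 0 ∧
            Function.Bijective ⇑(fderiv ℝ (fderiv ℝ ℓ) x)) ∧
          ∀ y ∈ Metric.ball x₀ r, fderiv ℝ ℓ y = 0 → y = x := by
  rcases subsingleton_or_nontrivial (EuclideanSpace ℝ (Fin n)) with hE | hE
  · -- trivial case: the space is a single point
    refine ⟨1, one_pos, fun r hr _ => ⟨1, one_pos, fun ℓ hℓ _ => ?_⟩⟩
    refine ⟨x₀, ⟨mem_ball_self hr, ?_, ?_⟩, fun y _ _ => Subsingleton.elim y x₀⟩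
    · ext v
      have : v = 0 := Subsingleton.elim v 0
      simp [this]
    · constructor
      · intro a b _; exact Subsingleton.elim a b
      · intro y
        refine ⟨0, ?_⟩
        ext v
        have : v = 0 := Subsingleton.elim v 0
        simp [this]
  -- main case
  set g :  EuclideanSpace ℝ (Fin n) → (EuclideanSpace ℝ (Fin n) →L[ℝ] ℝ) := fderiv ℝ ℓ₂ with hg
  set A :  EuclideanSpace ℝ (Fin n) →L[ℝ] (EuclideanSpace ℝ (Fin n) →L[ℝ] ℝ) := fderiv ℝ g x₀ with hA
  have hgC1 : ContDiff ℝ 1 g := hℓ₂.fderiv_right (by norm_num)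
  have hGcont : Continuous (fun x => fderiv ℝ g x) := hgC1.continuous_fderiv one_ne_zero
  -- the linear equivalence given by the invertible second derivative
  have hndA : Function.Bijective (A.toLinearMap) := hnd
  let eL :  EuclideanSpace ℝ (Fin n) ≃ₗ[ℝ] (EuclideanSpace ℝ (Fin n) →L[ℝ] ℝ) := LinearEquiv.ofBijective A.toLinearMap hndA
  let eA :  EuclideanSpace ℝ (Fin n) ≃L[ℝ] (EuclideanSpace ℝ (Fin n) →L[ℝ] ℝ) := eL.toContinuousLinearEquiv
  have hAe : ((eA :  EuclideanSpace ℝ (Fin n) →L[ℝ] (EuclideanSpace ℝ (Fin n) →L[ℝ] ℝ))) = A := by ext x; rfl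
  set N : ℝ≥0 := ‖(eA.symm : (EuclideanSpace ℝ (Fin n) →L[ℝ] ℝ) →L[ℝ] EuclideanSpace ℝ (Fin n))‖₊ with hN
  have hNpos : 0 < N := by
    rcases exists_ne (0 : EuclideanSpace ℝ (Fin n)) with ⟨v, hv⟩
    rw [pos_iff_ne_zero]
    intro h0
    have h0' : ‖(eA.symm : (EuclideanSpace ℝ (Fin n) →L[ℝ] ℝ) →L[ℝ] EuclideanSpace ℝ (Fin n))‖ = 0 := by
      simpa [hN] using congrArg (fun t : ℝ≥0 => (t : ℝ)) h0
    have hzero : (eA.symm : (EuclideanSpace ℝ (Fin n) →L[ℝ] ℝ) →L[ℝ] EuclideanSpace ℝ (Fin n)) = 0 :=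
      (ContinuousLinearMap.opNorm_zero_iff _).1 h0'
    have hv0 : eA.symm (eA v) = 0 := by
      rw [← ContinuousLinearEquiv.coe_coe, hzero]; rfl
    rw [eA.symm_apply_apply] at hv0
    exact hv hv0
  set c : ℝ≥0 := N⁻¹ / 2 with hc
  have hNinv : (0 : ℝ≥0) < N⁻¹ := by positivity
  have hcpos : (0 : ℝ≥0) < c := by positivity
  have hcN : c < N⁻¹ := by
    rw [hc]; exact NNReal.half_lt_self (ne_of_gt hNinv)
  have hcR : (0 : ℝ) < (c : ℝ) := hcpos
  -- choose r₀ by continuity of the second derivative of ℓ₂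
  obtain ⟨δ, hδpos, hδ⟩ :=
    (Metric.continuousAt_iff (f := fun x => fderiv ℝ g x) (a := x₀)).1 (by exact hGcont.continuousAt) ((c : ℝ) / 2) (by positivity)
  refine ⟨δ / 2, by positivity, fun r hr hrδ => ?_⟩
  have hGnear : ∀ x ∈ closedBall x₀ r, ‖fderiv ℝ g x - A‖ < (c : ℝ) / 2 := by
    intro x hx
    have hxδ : dist x x₀ < δ := lt_of_le_of_lt (mem_closedBall.1 hx) (by linarith)
    have := hδ hxδ
    have this' : dist (fderiv ℝ g x) A < (c : ℝ) / 2 := this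
    rwa [dist_eq_norm (fderiv ℝ g x) A] at this'
  set ε : ℝ := min ((c : ℝ) / 2) (((N : ℝ)⁻¹ - c) * (r / 2)) with hε
  have hNc : (0 : ℝ) < (N : ℝ)⁻¹ - c := by
    have : (c : ℝ) < (N : ℝ)⁻¹ := by exact_mod_cast (by simpa using hcN : c < N⁻¹)
    linarith
  have hεpos : 0 < ε := lt_min (by positivity) (by positivity)
  refine ⟨ε, hεpos, fun ℓ hℓ hclose => ?_⟩
  set f :  EuclideanSpace ℝ (Fin n) → (EuclideanSpace ℝ (Fin n) →L[ℝ] ℝ) := fderiv ℝ ℓ with hf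
  have hfC1 : ContDiff ℝ 1 f := hℓ.fderiv_right (by norm_num)
  have hfd : Differentiable ℝ f := hfC1.differentiable one_ne_zero
  -- the derivative of f is everywhere c-close to A on the ball
  have hbound : ∀ x ∈ closedBall x₀ r, ‖fderiv ℝ f x - A‖ ≤ (c : ℝ) := by
    intro x hx
    have h1 : ‖fderiv ℝ f x - fderiv ℝ g x‖ < ε := by
      have := hclose x hx
      have h0 : (0 : ℝ) ≤ ‖f x - g x‖ := norm_nonneg _
      linarith
    have h2 := hGnear x hx
    have hεc : ε ≤ (c : ℝ) / 2 := min_le_left _ _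
    calc ‖fderiv ℝ f x - A‖
        ≤ ‖fderiv ℝ f x - fderiv ℝ g x‖ + ‖fderiv ℝ g x - A‖ := by
          have := dist_triangle (fderiv ℝ f x) (fderiv ℝ g x) A
          rw [dist_eq_norm (fderiv ℝ f x) A, dist_eq_norm (fderiv ℝ f x) (fderiv ℝ g x),
            dist_eq_norm (fderiv ℝ g x) A] at this
          exact this
      _ ≤ (c : ℝ) := by linarith
  -- f approximates the linear equivalence eA on the closed ball
  have happrox : ApproximatesLinearOn f (eA :  EuclideanSpace ℝ (Fin n) →L[ℝ] (EuclideanSpace ℝ (Fin n) →L[ℝ] ℝ)) (closedBall x₀ r) c := by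
    intro x hx y hy
    rw [hAe]
    exact Convex.norm_image_sub_le_of_norm_hasFDerivWithin_le'
      (fun z hz => (hfd z).hasFDerivAt.hasFDerivWithinAt)
      (fun z hz => hbound z hz) (convex_closedBall _ _) hy hx
  -- injectivity on the closed ball
  have hinj : InjOn f (closedBall x₀ r) := happrox.injOn (Or.inr hcN)
  -- surjectivity onto a small ball around f x₀
  have hsub : closedBall x₀ (r / 2) ⊆ closedBall x₀ r :=
    closedBall_subset_closedBall (by linarith)
  have hsurj :=
    (happrox.mono_set hsub).surjOn_closedBall_of_nonlinearRightInverse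
      eA.toNonlinearRightInverse (by positivity : (0 : ℝ) ≤ r / 2) subset_rfl
  have h0mem : (0 :  EuclideanSpace ℝ (Fin n) →L[ℝ] ℝ) ∈
      closedBall (f x₀) (((eA.toNonlinearRightInverse.nnnorm : ℝ)⁻¹ - c) * (r / 2)) := by
    have hnn : (eA.toNonlinearRightInverse.nnnorm : ℝ) = (N : ℝ) := rfl
    rw [mem_closedBall, dist_comm, dist_eq_norm, sub_zero, hnn]
    have : ‖f x₀ - g x₀‖ < ε := by
      have := hclose x₀ (mem_closedBall_self (le_of_lt hr))
      have h0 : (0 : ℝ) ≤ ‖fderiv ℝ f x₀ - fderiv ℝ g x₀‖ := norm_nonneg (fderiv ℝ f x₀ - fderiv ℝ g x₀)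
      linarith
    have hfx₀ : ‖f x₀‖ < ε := by
      rwa [hcrit, sub_zero] at this
    exact le_of_lt (lt_of_lt_of_le hfx₀ (min_le_right _ _))
  obtain ⟨x, hxball, hfx⟩ := hsurj h0mem
  have hxr : x ∈ ball x₀ r :=
    lt_of_le_of_lt (mem_closedBall.1 hxball) (by linarith)
  have hxcb : x ∈ closedBall x₀ r := hsub hxball
  -- nondegeneracy at x
  have hBbij : Function.Bijective ⇑(fderiv ℝ f x) := by
    set B := fderiv ℝ f x with hB
    have hBA : ‖B - A‖ ≤ (c : ℝ) := hbound x hxcb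
    have hBinj : Function.Injective ⇑B := by
      intro u v huv
      have huv0 : B (u - v) = 0 := by rw [map_sub, huv, sub_self]
      by_contra hne
      have hw : u - v ≠ 0 := sub_ne_zero.2 hne
      set w := u - v
      have h1 : ‖w‖ ≤ (N : ℝ) * ‖A w‖ := by
        have h := (eA.symm : (EuclideanSpace ℝ (Fin n) →L[ℝ] ℝ) →L[ℝ] EuclideanSpace ℝ (Fin n)).le_opNorm (eA w)
        simp only [ContinuousLinearEquiv.coe_coe, ContinuousLinearEquiv.symm_apply_apply] at h
        have heAw : eA w = A w := by rw [← hAe]; rfl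
        rw [heAw] at h
        have hNr : ((N : ℝ≥0) : ℝ)
            = ‖(eA.symm : (EuclideanSpace ℝ (Fin n) →L[ℝ] ℝ) →L[ℝ] EuclideanSpace ℝ (Fin n))‖ := by
          rw [hN]; rfl
        rw [hNr]
        exact h
      have h2 : ‖A w‖ ≤ (c : ℝ) * ‖w‖ := by
        have : ‖(A - B) w‖ ≤ ‖A - B‖ * ‖w‖ := (A - B).le_opNorm w
        have hAB : (A - B) w = A w := by
          simp [ContinuousLinearMap.sub_apply, huv0]
        rw [hAB] at this
        have hABn : ‖A - B‖ ≤ (c : ℝ) := by rwa [norm_sub_rev B A] at hBA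
        calc ‖A w‖ ≤ ‖A - B‖ * ‖w‖ := this
          _ ≤ (c : ℝ) * ‖w‖ := by
            exact mul_le_mul_of_nonneg_right hABn (norm_nonneg _)
      have hw0 : 0 < ‖w‖ := norm_pos_iff.2 hw
      have hNc' : (N : ℝ) * (c : ℝ) < 1 := by
        have : (c : ℝ) < (N : ℝ)⁻¹ := by linarith
        have hN0 : (0 : ℝ) < (N : ℝ) := hNpos
        calc (N : ℝ) * (c : ℝ) < (N : ℝ) * (N : ℝ)⁻¹ :=
              mul_lt_mul_of_pos_left this hN0
          _ = 1 := mul_inv_cancel₀ (ne_of_gt hN0)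
      have : ‖w‖ ≤ (N : ℝ) * ((c : ℝ) * ‖w‖) :=
        le_trans h1 (mul_le_mul_of_nonneg_left h2 (le_of_lt (by exact_mod_cast hNpos)))
      nlinarith
    refine ⟨hBinj, ?_⟩
    have hfr : Module.finrank ℝ (EuclideanSpace ℝ (Fin n)) = Module.finrank ℝ (EuclideanSpace ℝ (Fin n) →L[ℝ] ℝ) :=
      eL.finrank_eq
    exact (LinearMap.injective_iff_surjective_of_finrank_eq_finrank hfr).1
      (show Function.Injective B.toLinearMap from hBinj)
  refine ⟨x, ⟨hxr, hfx, hBbij⟩, fun y hy hfy => ?_⟩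
  exact hinj (ball_subset_closedBall hy) hxcb (by rw [hfy, hfx])
end
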